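/- arXiv:1212.1149 — 13 statements merged into one kernel-verified Lean document; each statement's English description precedes it below -/
import Mathlib

section
/- Let A = [a_ij] be the n×n zero-one adjacency matrix (with zero diagonal) of a loopless digraph G on vertices v_1,…,v_n, with out-degrees α_i^+ = Σ_j a_ij and in-degrees α_j^- = Σ_i a_ij. If A is the unique zero-one matrix with zero diagonal having row sums (α_1^+,…,α_n^+) and column sums (α_1^-,…,α_n^-) (i.e., G is the unique vertex-labeled realization of its degree sequence), then G contains no 2-switch and no induced directed 3-cycle. -/
/-- `A` is a zero-one matrix. -/
def ZeroOne (n : ℕ) (A : Fin n → Fin n → ℕ) : Prop :=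
  ∀ i j, A i j = 0 ∨ A i j = 1

/-- `A` has zero diagonal (no loops). -/
def ZeroDiag (n : ℕ) (A : Fin n → Fin n → ℕ) : Prop :=
  ∀ i, A i i = 0

/-- Out-degree of vertex `i` (row sum). -/
def outdeg (n : ℕ) (A : Fin n → Fin n → ℕ) (i : Fin n) : ℕ := ∑ j, A i j

/-- In-degree of vertex `j` (column sum). -/
def indeg (n : ℕ) (A : Fin n → Fin n → ℕ) (j : Fin n) : ℕ := ∑ i, A i j

/-- `G` contains a 2-switch: four distinct vertices `w,x,y,z` with arcs `(w,x)`, `(y,z)`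
and non-arcs `(w,z)`, `(y,x)`. -/
def HasTwoSwitch (n : ℕ) (A : Fin n → Fin n → ℕ) : Prop :=
  ∃ w x y z : Fin n, w ≠ x ∧ w ≠ y ∧ w ≠ z ∧ x ≠ y ∧ x ≠ z ∧ y ≠ z ∧
    A w x = 1 ∧ A y z = 1 ∧ A w z = 0 ∧ A y x = 0

/-- `G` contains an induced directed 3-cycle on three distinct vertices `x,y,z`. -/
def HasInducedC3 (n : ℕ) (A : Fin n → Fin n → ℕ) : Prop :=
  ∃ x y z : Fin n, x ≠ y ∧ x ≠ z ∧ y ≠ z ∧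
    A x y = 1 ∧ A y z = 1 ∧ A z x = 1 ∧
    A y x = 0 ∧ A z y = 0 ∧ A x z = 0

/-- The degree sequence `(p i, m i)` is in positive lexicographic order. -/
def PosLex (n : ℕ) (p m : Fin n → ℕ) : Prop :=
  ∀ i j : Fin n, (i : ℕ) + 1 = (j : ℕ) →
    p j ≤ p i ∧ (p i = p j → m j ≤ m i)

/-- Condition (3): for distinct `i, j, k` with `i < j`, `a_{jk} = 1` implies `a_{ik} = 1`. -/
def Nested (n : ℕ) (A : Fin n → Fin n → ℕ) : Prop :=
  ∀ i j k : Fin n, i ≠ j → i ≠ k → j ≠ k → i < j → A j k = 1 → A i k = 1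

/-- `A` is the unique zero-one matrix with zero diagonal having its row and column sums. -/
def UniqueRealization (n : ℕ) (A : Fin n → Fin n → ℕ) : Prop :=
  ∀ B : Fin n → Fin n → ℕ, ZeroOne n B → ZeroDiag n B →
    (∀ i, outdeg n B i = outdeg n A i) → (∀ j, indeg n B j = indeg n A j) → B = A


lemma sum_two_swap {n : ℕ} (f g : Fin n → ℕ) (a b : Fin n) (hab : a ≠ b)
    (h2 : f a + f b = g a + g b) (hoff : ∀ j, j ≠ a → j ≠ b → f j = g j) :
    ∑ j, f j = ∑ j, g j := by
  have key : ∀ h : Fin n → ℕ,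
      ∑ j, h j = h a + (h b + ∑ j ∈ (Finset.univ.erase a).erase b, h j) := by
    intro h
    rw [← Finset.add_sum_erase _ h (Finset.mem_univ a), ← Finset.add_sum_erase]
    exact Finset.mem_erase.mpr ⟨hab.symm, Finset.mem_univ b⟩
  rw [key f, key g]
  have hs : ∑ j ∈ (Finset.univ.erase a).erase b, f j
      = ∑ j ∈ (Finset.univ.erase a).erase b, g j := by
    apply Finset.sum_congr rfl
    intro j hj
    simp only [Finset.mem_erase] at hj
    exact hoff j hj.2.1 hj.1
  omega

/-- If `A` is the unique vertex-labeled realization of its degree sequence,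
then `G` contains no 2-switch and no induced directed 3-cycle. -/
theorem stmt0 (n : ℕ) (A : Fin n → Fin n → ℕ)
    (h01 : ZeroOne n A) (hdiag : ZeroDiag n A)
    (huniq : UniqueRealization n A) :
    ¬ HasTwoSwitch n A ∧ ¬ HasInducedC3 n A := by
  constructor
  · rintro ⟨w, x, y, z, hwx, hwy, hwz, hxy, hxz, hyz, awx, ayz, awz, ayx⟩
    set B : Fin n → Fin n → ℕ := fun i j =>
      if i = w then (if j = x then 0 else if j = z then 1 else A i j)
      else if i = y then (if j = x then 1 else if j = z then 0 else A i j)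
      else A i j with hB
    have hBA : B = A := by
      apply huniq
      · intro i j
        simp only [hB]
        split_ifs <;> simp [h01 i j]
      · intro i
        simp only [hB]
        split_ifs <;> first | rfl | exact hdiag i | simp_all
      · intro i
        unfold outdeg
        by_cases hiw : i = w
        · subst hiw
          apply sum_two_swap _ _ x z hxz
          · simp only [hB]; clear hB B; split_ifs <;> simp_all
          · intro j hjx hjz
            simp only [hB]; clear hB B; split_ifs <;> simp_all
        · by_cases hiy : i = y
          · subst hiy
            apply sum_two_swap _ _ x z hxz
            · simp only [hB]; clear hB B; split_ifs <;> simp_all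
            · intro j hjx hjz
              simp only [hB]; clear hB B; split_ifs <;> simp_all
          · apply Finset.sum_congr rfl
            intro j _
            simp only [hB]; clear hB B; split_ifs <;> simp_all
      · intro j
        unfold indeg
        by_cases hjx : j = x
        · subst hjx
          apply sum_two_swap _ _ w y hwy
          · simp only [hB]; clear hB B; split_ifs <;> simp_all
          · intro i hiw hiy
            simp only [hB]; clear hB B; split_ifs <;> simp_all
        · by_cases hjz : j = z
          · subst hjz
            apply sum_two_swap _ _ w y hwy
            · simp only [hB]; clear hB B; split_ifs <;> simp_all
            · intro i hiw hiy
              simp only [hB]; clear hB B; split_ifs <;> simp_all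
          · apply Finset.sum_congr rfl
            intro i _
            simp only [hB]; clear hB B; split_ifs <;> simp_all
    have hBwx : B w x = 0 := by simp [hB]
    rw [hBA] at hBwx
    omega
  · rintro ⟨x, y, z, hxy, hxz, hyz, axy, ayz, azx, ayx, azy, axz⟩
    set B : Fin n → Fin n → ℕ := fun i j =>
      if i = x then (if j = y then 0 else if j = z then 1 else A i j)
      else if i = y then (if j = x then 1 else if j = z then 0 else A i j)
      else if i = z then (if j = x then 0 else if j = y then 1 else A i j)
      else A i j with hB
    have hBA : B = A := by
      apply huniq
      · intro i j
        simp only [hB]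
        split_ifs <;> simp [h01 i j]
      · intro i
        simp only [hB]
        split_ifs <;> first | rfl | exact hdiag i | simp_all
      · intro i
        unfold outdeg
        by_cases hix : i = x
        · subst hix
          apply sum_two_swap _ _ y z hyz
          · simp only [hB]; clear hB B; split_ifs <;> simp_all
          · intro j hjy hjz
            simp only [hB]; clear hB B; split_ifs <;> simp_all
        · by_cases hiy : i = y
          · subst hiy
            apply sum_two_swap _ _ x z hxz
            · simp only [hB]; clear hB B; split_ifs <;> simp_all
            · intro j hjx hjz
              simp only [hB]; clear hB B; split_ifs <;> simp_all
          · by_cases hiz : i = z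
            · subst hiz
              apply sum_two_swap _ _ x y hxy
              · simp only [hB]; clear hB B; split_ifs <;> simp_all
              · intro j hjx hjy
                simp only [hB]; clear hB B; split_ifs <;> simp_all
            · apply Finset.sum_congr rfl
              intro j _
              simp only [hB]; clear hB B; split_ifs <;> simp_all
      · intro j
        unfold indeg
        by_cases hjx : j = x
        · subst hjx
          apply sum_two_swap _ _ y z hyz
          · simp only [hB]; clear hB B; split_ifs <;> simp_all
          · intro i hiy hiz
            simp only [hB]; clear hB B; split_ifs <;> simp_all
        · by_cases hjy : j = y
          · subst hjy
            apply sum_two_swap _ _ x z hxz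
            · simp only [hB]; clear hB B; split_ifs <;> simp_all
            · intro i hix hiz
              simp only [hB]; clear hB B; split_ifs <;> simp_all
          · by_cases hjz : j = z
            · subst hjz
              apply sum_two_swap _ _ x y hxy
              · simp only [hB]; clear hB B; split_ifs <;> simp_all
              · intro i hix hiy
                simp only [hB]; clear hB B; split_ifs <;> simp_all
            · apply Finset.sum_congr rfl
              intro i _
              simp only [hB]; clear hB B; split_ifs <;> simp_all
    have hBxy : B x y = 0 := by simp [hB]
    rw [hBA] at hBxy
    omega
end

section
/- Let A = [a_ij] be the n×n zero-one adjacency matrix (with zero diagonal) of a loopless digraph G on vertices v_1,…,v_n, with out-degrees α_i^+ = Σ_j a_ij and in-degrees α_j^- = Σ_i a_ij, and suppose the degree sequence α = ((α_1^+,α_1^-),…,(α_n^+,α_n^-)) is in positive lexicographic order. If G contains no 2-switch and no induced directed 3-cycle, then for every triple of distinct indices i, j, k with i < j, a_jk = 1 implies a_ik = 1. -/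
/-- PosLex extends to arbitrary pairs `i ≤ j` (distance `d`). -/
lemma posLex_ext {n : ℕ} {p m : Fin n → ℕ} (hlex : PosLex n p m) :
    ∀ d : ℕ, ∀ i j : Fin n, (i : ℕ) + d = (j : ℕ) →
      p j ≤ p i ∧ (p i = p j → m j ≤ m i) := by
  intro d
  induction d with
  | zero =>
    intro i j h
    have : i = j := Fin.ext (by omega)
    subst this
    exact ⟨le_rfl, fun _ => le_rfl⟩
  | succ d ih =>
    intro i j h
    have hjn : (j : ℕ) < n := j.isLt
    have hmn : (i : ℕ) + d < n := by omega
    set jm : Fin n := ⟨(i : ℕ) + d, hmn⟩ with hjm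
    have h1 := ih i jm rfl
    have h2 := hlex jm j (by simp [hjm]; omega)
    refine ⟨h2.1.trans h1.1, fun he => ?_⟩
    have e1 : p i = p jm := by omega
    have e2 : p jm = p j := by omega
    exact (h2.2 e2).trans (h1.2 e1)

/-- if the degree sequence is in positive lexicographic order and `G` has
no 2-switch and no induced directed 3-cycle, then the nesting condition holds. -/
theorem stmt1 (n : ℕ) (A : Fin n → Fin n → ℕ)
    (h01 : ZeroOne n A) (hdiag : ZeroDiag n A)
    (hlex : PosLex n (outdeg n A) (indeg n A))
    (hsw : ¬ HasTwoSwitch n A) (hc3 : ¬ HasInducedC3 n A) :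
    Nested n A := by
  intro i j k hij hik hjk hlt hjk1
  by_contra hik1
  have hik0 : A i k = 0 := by rcases h01 i k with h | h; exacts [h, absurd h hik1]
  have hltn : (i : ℕ) < (j : ℕ) := hlt
  have hout := posLex_ext hlex ((j : ℕ) - (i : ℕ)) i j (by omega)
  -- split sums off {i,j,k}
  set s : Finset (Fin n) := Finset.univ \ {i, j, k} with hs
  have hsplit : ∀ f : Fin n → ℕ, ∑ x, f x = (∑ x ∈ s, f x) + (f i + f j + f k) := by
    intro f
    have hsub : ({i, j, k} : Finset (Fin n)) ⊆ Finset.univ := Finset.subset_univ _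
    have h3 : ∑ x ∈ ({i, j, k} : Finset (Fin n)), f x = f i + f j + f k := by
      rw [Finset.sum_insert (by simp [hij, hik]),
        Finset.sum_insert (by simp [hjk]), Finset.sum_singleton]
      ring
    rw [← Finset.sum_sdiff hsub, h3, ← hs]
  have hmem : ∀ x : Fin n, x ∈ s → x ≠ i ∧ x ≠ j ∧ x ≠ k := by
    intro x hx
    simp only [hs, Finset.mem_sdiff, Finset.mem_insert, Finset.mem_singleton] at hx
    tauto
  set Si := ∑ x ∈ s, A i x with hSi
  set Sj := ∑ x ∈ s, A j x with hSj
  have hoi : outdeg n A i = Si + A i j := by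
    have := hsplit (A i); rw [outdeg, this, hdiag i, hik0]; ring
  have hoj : outdeg n A j = Sj + A j i + 1 := by
    have := hsplit (A j); rw [outdeg, this, hdiag j, hjk1]; ring
  -- Step 1: no column x outside {i,j,k} with A i x = 1, A j x = 0
  have hnoSw : ¬ Sj < Si := by
    intro hlt2
    obtain ⟨x, hxs, hx⟩ := Finset.exists_lt_of_sum_lt hlt2
    obtain ⟨hxi, hxj, hxk⟩ := hmem x hxs
    have hix1 : A i x = 1 := by rcases h01 i x with h | h <;> rcases h01 j x with h' | h' <;> omega
    have hjx0 : A j x = 0 := by rcases h01 i x with h | h <;> rcases h01 j x with h' | h' <;> omega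
    exact hsw ⟨i, x, j, k, hxi.symm, hij, hik, hxj, hxk, hjk, hix1, hjk1, hik0, hjx0⟩
  have hSle : Si ≤ Sj := not_lt.mp hnoSw
  have hij1 : A i j ≤ 1 := by rcases h01 i j with h | h <;> omega
  -- from outdeg j ≤ outdeg i deduce A i j = 1, A j i = 0, Si = Sj, and equal outdeg
  have hAij : A i j = 1 := by omega
  have hAji : A j i = 0 := by omega
  have hpeq : outdeg n A i = outdeg n A j := by omega
  have hind : indeg n A j ≤ indeg n A i := hout.2 hpeq
  -- column sums
  set Ti := ∑ y ∈ s, A y i with hTi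
  set Tj := ∑ y ∈ s, A y j with hTj
  have hii : indeg n A i = Ti + A k i := by
    have := hsplit (fun y => A y i); rw [indeg, this, hdiag i, hAji]; ring
  have hij' : indeg n A j = Tj + A k j + 1 := by
    have := hsplit (fun y => A y j); rw [indeg, this, hdiag j, hAij]; ring
  -- no induced C3 forces A k i ≤ A k j
  have hkij : A k i ≤ A k j := by
    rcases h01 k i with h | h
    · omega
    rcases h01 k j with h' | h'
    · exact absurd ⟨i, j, k, hij, hik, hjk, hAij, hjk1, h, hAji, h', hik0⟩ hc3
    · omega
  have hTlt : Tj < Ti := by omega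
  obtain ⟨y, hys, hy⟩ := Finset.exists_lt_of_sum_lt hTlt
  obtain ⟨hyi, hyj, hyk⟩ := hmem y hys
  have hyi1 : A y i = 1 := by rcases h01 y i with h | h <;> rcases h01 y j with h' | h' <;> omega
  have hyj0 : A y j = 0 := by rcases h01 y i with h | h <;> rcases h01 y j with h' | h' <;> omega
  have hyk1 : A y k = 1 := by
    rcases h01 y k with h | h
    · exact absurd ⟨y, i, j, k, hyi, hyj, hyk, hij.symm ∘ Eq.symm ∘ id, hik, hjk, hyi1, hjk1, h, hAji⟩ hsw
    · exact h
  exact hsw ⟨i, j, y, k, hij, hyi.symm, hik, hyj.symm, hjk, hyk, hAij, hyk1, hik0, hyj0⟩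
end

section
/- Let A = [a_ij] be an n×n zero-one matrix with zero diagonal, with row sums α_i^+ = Σ_j a_ij and column sums α_j^- = Σ_i a_ij. If for every triple of distinct indices i, j, k with i < j, a_jk = 1 implies a_ik = 1, then the Fulkerson–Chen inequalities hold with equality: for every k with 1 ≤ k ≤ n, Σ_{i=1}^k min(α_i^-, k−1) + Σ_{i=k+1}^n min(α_i^-, k) = Σ_{i=1}^k α_i^+. -/
lemma indeg_lt (n : ℕ) (A : Fin n → Fin n → ℕ) (h01 : ZeroOne n A)
    (hdiag : ZeroDiag n A) (j : Fin n) : indeg n A j < n := by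
  have hpos : 0 < n := j.pos
  have h1 : ∑ i ∈ Finset.univ.erase j, A i j = indeg n A j :=
    Finset.sum_erase Finset.univ (hdiag j)
  have h2 : ∑ i ∈ Finset.univ.erase j, A i j ≤ ∑ _i ∈ Finset.univ.erase j, 1 :=
    Finset.sum_le_sum (fun i _ => by rcases h01 i j with h | h <;> omega)
  have h3 : (Finset.univ.erase j).card = n - 1 := by
    rw [Finset.card_erase_of_mem (Finset.mem_univ j)]; simp
  simp only [Finset.sum_const, smul_eq_mul, mul_one, h3] at h2
  omega

lemma count_lemma (n k j d : ℕ) (hk1 : 1 ≤ k) (hkn : k ≤ n) (hj : j < n) (hd : d < n) :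
    (∑ i ∈ Finset.range n,
      if (i < k ∧ i ≠ j ∧ (i < d ∨ (j < d ∧ i = d))) then 1 else 0)
      = if j < k then min d (k - 1) else min d k := by
  rw [Finset.sum_boole, Nat.cast_id]
  by_cases hjk : j < k
  · rw [if_pos hjk]
    by_cases hjd : j < d
    · have he : (Finset.range n).filter
          (fun i => i < k ∧ i ≠ j ∧ (i < d ∨ (j < d ∧ i = d)))
          = (Finset.range (min k (d + 1))).erase j := by
        ext x
        simp only [Finset.mem_filter, Finset.mem_range, Finset.mem_erase, lt_min_iff]
        omega
      rw [he, Finset.card_erase_of_mem (by simp only [Finset.mem_range, lt_min_iff]; omega),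
        Finset.card_range]
      omega
    · have he : (Finset.range n).filter
          (fun i => i < k ∧ i ≠ j ∧ (i < d ∨ (j < d ∧ i = d)))
          = Finset.range d := by
        ext x
        simp only [Finset.mem_filter, Finset.mem_range]
        omega
      rw [he, Finset.card_range]
      omega
  · rw [if_neg hjk]
    have he : (Finset.range n).filter
        (fun i => i < k ∧ i ≠ j ∧ (i < d ∨ (j < d ∧ i = d)))
        = Finset.range (min k d) := by
      ext x
      simp only [Finset.mem_filter, Finset.mem_range, lt_min_iff]
      omega
    rw [he, Finset.card_range]
    omega

lemma col_char (n : ℕ) (A : Fin n → Fin n → ℕ) (h01 : ZeroOne n A)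
    (hdiag : ZeroDiag n A) (hnest : Nested n A) (j i : Fin n) :
    A i j = 1 ↔ (i ≠ j ∧ ((i : ℕ) < indeg n A j ∨
      ((j : ℕ) < indeg n A j ∧ (i : ℕ) = indeg n A j))) := by
  set d := indeg n A j with hdd
  have down : ∀ i' i'' : Fin n, i' < i'' → i' ≠ j → A i'' j = 1 → A i' j = 1 := by
    intro i' i'' hlt hne h1
    have hne2 : i'' ≠ j := by
      intro h; rw [h, hdiag j] at h1; omega
    exact hnest i' i'' j (ne_of_lt hlt) hne hne2 hlt h1
  have lower : ∀ S : Finset (Fin n), (∀ x ∈ S, A x j = 1) → S.card ≤ d := by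
    intro S hS
    calc S.card = ∑ x ∈ S, A x j := by
          rw [Finset.sum_congr rfl hS]; simp
      _ ≤ ∑ x, A x j := Finset.sum_le_sum_of_subset (Finset.subset_univ S)
      _ = d := rfl
  have upper : ∀ S : Finset (Fin n), (∀ x, x ∉ S → A x j = 0) → d ≤ S.card := by
    intro S hS
    calc d = ∑ x, A x j := rfl
      _ = ∑ x ∈ S, A x j :=
          (Finset.sum_subset (Finset.subset_univ S) (fun x _ hx => hS x hx)).symm
      _ ≤ ∑ _x ∈ S, 1 := Finset.sum_le_sum (fun x _ => by rcases h01 x j with h | h <;> omega)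
      _ = S.card := by simp
  constructor
  · intro h1
    have hij : i ≠ j := by
      intro h; rw [h, hdiag j] at h1; omega
    refine ⟨hij, ?_⟩
    by_contra hcon
    push_neg at hcon
    obtain ⟨hdi, hrest⟩ := hcon
    have hall : ∀ x ∈ insert i ((Finset.Iio i).erase j), A x j = 1 := by
      intro x hx
      rcases Finset.mem_insert.mp hx with h | h
      · rw [h]; exact h1
      · obtain ⟨hxj, hxi⟩ := Finset.mem_erase.mp h
        exact down x i (Finset.mem_Iio.mp hxi) hxj h1
    have hcard := lower _ hall
    have hnotmem : i ∉ (Finset.Iio i).erase j := by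
      intro h; exact absurd (Finset.mem_Iio.mp (Finset.mem_of_mem_erase h)) (lt_irrefl i)
    rw [Finset.card_insert_of_notMem hnotmem] at hcard
    by_cases hji : j < i
    · rw [Finset.card_erase_of_mem (Finset.mem_Iio.mpr hji), Fin.card_Iio] at hcard
      have hji' : (j : ℕ) < (i : ℕ) := Fin.lt_def.mp hji
      exact hrest (by omega) (by omega)
    · rw [Finset.erase_eq_of_notMem (fun h => hji (Finset.mem_Iio.mp h)),
        Fin.card_Iio] at hcard
      omega
  · rintro ⟨hij, hdisj⟩
    by_contra h1
    have h0 : A i j = 0 := by rcases h01 i j with h | h; exact h; exact absurd h h1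
    have hzero : ∀ x, x ∉ (Finset.Iio i).erase j → A x j = 0 := by
      intro x hx
      rw [Finset.mem_erase, Finset.mem_Iio] at hx
      push_neg at hx
      by_cases hxj : x = j
      · rw [hxj]; exact hdiag j
      · have hxi : i ≤ x := hx hxj
        by_cases hxi2 : x = i
        · rw [hxi2]; exact h0
        · have hlt : i < x := lt_of_le_of_ne hxi (fun h => hxi2 h.symm)
          rcases h01 x j with h | h
          · exact h
          · exact absurd (down i x hlt hij h) h1
    have hcard := upper _ hzero
    by_cases hji : j < i
    · rw [Finset.card_erase_of_mem (Finset.mem_Iio.mpr hji), Fin.card_Iio] at hcard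
      have hji' : (j : ℕ) < (i : ℕ) := Fin.lt_def.mp hji
      rcases hdisj with h | ⟨h1', h2'⟩ <;> omega
    · rw [Finset.erase_eq_of_notMem (fun h => hji (Finset.mem_Iio.mp h)),
        Fin.card_Iio] at hcard
      have hji' : ¬ (j : ℕ) < (i : ℕ) := fun h => hji (Fin.lt_def.mpr h)
      rcases hdisj with h | ⟨h1', h2'⟩ <;> omega

/-- the nesting condition implies the Fulkerson–Chen inequalities hold
with equality. -/
theorem stmt2 (n : ℕ) (A : Fin n → Fin n → ℕ)
    (h01 : ZeroOne n A) (hdiag : ZeroDiag n A)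
    (hnest : Nested n A) :
    ∀ k : ℕ, 1 ≤ k → k ≤ n →
      (∑ i : Fin n, if (i : ℕ) < k then min (indeg n A i) (k - 1) else min (indeg n A i) k)
        = ∑ i : Fin n, if (i : ℕ) < k then outdeg n A i else 0 := by
  intro k hk1 hkn
  have key : ∀ j : Fin n,
      (∑ i : Fin n, if (i : ℕ) < k then A i j else 0)
        = if (j : ℕ) < k then min (indeg n A j) (k - 1) else min (indeg n A j) k := by
    intro j
    set d := indeg n A j with hdd
    have hdn : d < n := indeg_lt n A h01 hdiag j
    have step : ∀ i : Fin n, (if (i : ℕ) < k then A i j else 0)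
        = if ((i : ℕ) < k ∧ (i : ℕ) ≠ (j : ℕ) ∧
            ((i : ℕ) < d ∨ ((j : ℕ) < d ∧ (i : ℕ) = d))) then 1 else 0 := by
      intro i
      have hchar := col_char n A h01 hdiag hnest j i
      rcases h01 i j with h0 | h1
      · have hnc : ¬ ((i : ℕ) < k ∧ (i : ℕ) ≠ (j : ℕ) ∧
            ((i : ℕ) < d ∨ ((j : ℕ) < d ∧ (i : ℕ) = d))) := by
          rintro ⟨-, hne, hc⟩
          have : A i j = 1 := hchar.mpr ⟨fun h => hne (congrArg Fin.val h), hc⟩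
          omega
        rw [if_neg hnc]
        by_cases hik : (i : ℕ) < k
        · rw [if_pos hik, h0]
        · rw [if_neg hik]
      · obtain ⟨hne, hc⟩ := hchar.mp h1
        have hne' : (i : ℕ) ≠ (j : ℕ) := fun h => hne (Fin.ext h)
        by_cases hik : (i : ℕ) < k
        · rw [if_pos hik, if_pos ⟨hik, hne', hc⟩, h1]
        · rw [if_neg hik, if_neg (fun h => hik h.1)]
    rw [Finset.sum_congr rfl (fun i _ => step i),
      Fin.sum_univ_eq_sum_range (fun i => if (i < k ∧ i ≠ (j : ℕ) ∧
        (i < d ∨ ((j : ℕ) < d ∧ i = d))) then 1 else 0) n]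
    exact count_lemma n k (j : ℕ) d hk1 hkn j.isLt hdn
  have hrhs : ∀ i : Fin n, (if (i : ℕ) < k then outdeg n A i else 0)
      = ∑ j : Fin n, (if (i : ℕ) < k then A i j else 0) := by
    intro i
    by_cases h : (i : ℕ) < k <;> simp [h, outdeg]
  rw [Finset.sum_congr rfl (fun i _ => hrhs i), Finset.sum_comm]
  exact Finset.sum_congr rfl (fun j _ => (key j).symm)
end

section
/- Let A = [a_ij] be the n×n zero-one adjacency matrix (with zero diagonal) of a loopless digraph G on vertices v_1,…,v_n, with out-degrees α_i^+ = Σ_j a_ij and in-degrees α_j^- = Σ_i a_ij, and suppose the degree sequence α = ((α_1^+,α_1^-),…,(α_n^+,α_n^-)) is in positive lexicographic order. If for every k with 1 ≤ k ≤ n one has Σ_{i=1}^k min(α_i^-, k−1) + Σ_{i=k+1}^n min(α_i^-, k) = Σ_{i=1}^k α_i^+, then A is the unique zero-one matrix with zero diagonal having row sums (α_1^+,…,α_n^+) and column sums (α_1^-,…,α_n^-). -/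
def csum (n : ℕ) (A : Fin n → Fin n → ℕ) (k : ℕ) (j : Fin n) : ℕ :=
  ∑ i : Fin n, if (i : ℕ) < k then A i j else 0

lemma csum_succ (n : ℕ) (C : Fin n → Fin n → ℕ) (i j : Fin n) :
    csum n C ((i : ℕ) + 1) j = csum n C (i : ℕ) j + C i j := by
  unfold csum
  have h : ∀ x : Fin n, (if (x : ℕ) < (i : ℕ) + 1 then C x j else 0)
      = (if (x : ℕ) < (i : ℕ) then C x j else 0) + (if x = i then C x j else 0) := by
    intro x
    rcases lt_trichotomy (x : ℕ) (i : ℕ) with h | h | h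
    · rw [if_pos (Nat.lt_succ_of_lt h), if_pos h,
        if_neg (by intro he; subst he; exact lt_irrefl _ h)]
      simp
    · have hx : x = i := Fin.ext h
      subst hx; simp
    · rw [if_neg (by omega), if_neg (by omega),
        if_neg (by intro he; subst he; exact lt_irrefl _ h)]
  rw [Finset.sum_congr rfl (fun x _ => h x), Finset.sum_add_distrib,
    Finset.sum_ite_eq' Finset.univ i (fun x => C x j)]
  simp

lemma csum_le_cap (n : ℕ) (B : Fin n → Fin n → ℕ)
    (h01 : ZeroOne n B) (hdiag : ZeroDiag n B) (k : ℕ) (j : Fin n) :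
    csum n B k j ≤ if (j : ℕ) < k then min (indeg n B j) (k - 1) else min (indeg n B j) k := by
  have hle_in : csum n B k j ≤ indeg n B j := by
    unfold csum indeg
    refine Finset.sum_le_sum fun i _ => ?_
    split <;> simp
  have hbool : ∀ (p : Fin n → Prop) [DecidablePred p] (t : Finset ℕ),
      (∀ x : Fin n, p x → (x : ℕ) ∈ t) →
      (∑ i : Fin n, if p i then B i j else 0) ≤ t.card := by
    intro p _ t hp
    calc (∑ i : Fin n, if p i then B i j else 0)
        ≤ ∑ i : Fin n, if p i then 1 else 0 := by
          refine Finset.sum_le_sum fun i _ => ?_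
          rcases h01 i j with h | h <;> split <;> simp [h]
      _ = (Finset.univ.filter p).card := by
          have := Finset.sum_boole (p := p) (s := (Finset.univ : Finset (Fin n))) (R := ℕ)
          simpa using this
      _ ≤ t.card := Finset.card_le_card_of_injOn Fin.val
          (fun x hx => hp x (Finset.mem_filter.mp hx).2)
          (fun a _ b _ h => Fin.val_injective h)
  split
  · next hj =>
    refine le_min hle_in ?_
    · -- csum = sum over i<k, i≠j since B j j = 0
      have heq : csum n B k j = ∑ i : Fin n, if (i : ℕ) < k ∧ i ≠ j then B i j else 0 := by
        unfold csum
        refine Finset.sum_congr rfl fun x _ => ?_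
        by_cases hx : x = j
        · subst hx; simp [hdiag x]
        · by_cases hk' : (x : ℕ) < k <;> simp [hk', hx]
      rw [heq]
      have := hbool (fun i => (i : ℕ) < k ∧ i ≠ j) ((Finset.range k).erase (j : ℕ))
        (fun x hx => Finset.mem_erase.mpr ⟨fun h => hx.2 (Fin.val_injective h),
          Finset.mem_range.mpr hx.1⟩)
      calc _ ≤ ((Finset.range k).erase (j : ℕ)).card := this
        _ = k - 1 := by rw [Finset.card_erase_of_mem (Finset.mem_range.mpr hj),
            Finset.card_range]
  · exact le_min hle_in (by
      have := hbool (fun i => (i : ℕ) < k) (Finset.range k)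
        (fun x hx => Finset.mem_range.mpr hx)
      simpa [csum, Finset.card_range] using this)

lemma csum_forced (n : ℕ) (A B : Fin n → Fin n → ℕ)
    (hB01 : ZeroOne n B) (hBdiag : ZeroDiag n B)
    (hout : ∀ i, outdeg n B i = outdeg n A i)
    (hin : ∀ j, indeg n B j = indeg n A j)
    (hfc : ∀ k : ℕ, 1 ≤ k → k ≤ n →
      (∑ i : Fin n, if (i : ℕ) < k then min (indeg n A i) (k - 1) else min (indeg n A i) k)
        = ∑ i : Fin n, if (i : ℕ) < k then outdeg n A i else 0)
    (k : ℕ) (hk : k ≤ n) (j : Fin n) :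
    csum n B k j
      = if (j : ℕ) < k then min (indeg n A j) (k - 1) else min (indeg n A j) k := by
  rcases Nat.eq_zero_or_pos k with rfl | hk1
  · simp [csum]
  · have hle : ∀ x : Fin n, csum n B k x
        ≤ if (x : ℕ) < k then min (indeg n A x) (k - 1) else min (indeg n A x) k := by
      intro x
      have := csum_le_cap n B hB01 hBdiag k x
      rwa [hin x] at this
    have hsum : (∑ x : Fin n, csum n B k x)
        = ∑ x : Fin n, (if (x : ℕ) < k then min (indeg n A x) (k - 1)
            else min (indeg n A x) k) := by
      have h1 : (∑ x : Fin n, csum n B k x)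
          = ∑ i : Fin n, if (i : ℕ) < k then outdeg n A i else 0 := by
        unfold csum
        rw [Finset.sum_comm]
        refine Finset.sum_congr rfl fun i _ => ?_
        by_cases h : (i : ℕ) < k
        · simp only [h, if_true]
          rw [← hout i]; rfl
        · simp [h]
      rw [h1, ← hfc k hk1 hk]
    have := (Finset.sum_eq_sum_iff_of_le (fun x _ => hle x)).mp hsum j (Finset.mem_univ j)
    exact this

/-- equality in the Fulkerson–Chen inequalities implies `A` is the unique
zero-one matrix with zero diagonal having its row and column sums. -/
theorem stmt3 (n : ℕ) (A : Fin n → Fin n → ℕ)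
    (h01 : ZeroOne n A) (hdiag : ZeroDiag n A)
    (hlex : PosLex n (outdeg n A) (indeg n A))
    (hfc : ∀ k : ℕ, 1 ≤ k → k ≤ n →
      (∑ i : Fin n, if (i : ℕ) < k then min (indeg n A i) (k - 1) else min (indeg n A i) k)
        = ∑ i : Fin n, if (i : ℕ) < k then outdeg n A i else 0) :
    UniqueRealization n A := by
  intro B hB01 hBdiag hout hin
  funext i j
  have key : ∀ (C : Fin n → Fin n → ℕ), ZeroOne n C → ZeroDiag n C →
      (∀ x, outdeg n C x = outdeg n A x) → (∀ x, indeg n C x = indeg n A x) →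
      (if (j : ℕ) < (i : ℕ) + 1 then min (indeg n A j) ((i : ℕ) + 1 - 1)
          else min (indeg n A j) ((i : ℕ) + 1))
        = (if (j : ℕ) < (i : ℕ) then min (indeg n A j) ((i : ℕ) - 1)
          else min (indeg n A j) (i : ℕ)) + C i j := by
    intro C hC01 hCdiag hCout hCin
    have h1 := csum_forced n A C hC01 hCdiag hCout hCin hfc (i : ℕ) (le_of_lt i.isLt) j
    have h2 := csum_forced n A C hC01 hCdiag hCout hCin hfc ((i : ℕ) + 1) i.isLt j
    rw [← h1, ← h2]
    exact csum_succ n C i j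
  have hA := key A h01 hdiag (fun _ => rfl) (fun _ => rfl)
  have hB := key B hB01 hBdiag hout hin
  exact Nat.add_left_cancel (hB.symm.trans hA)
end

section
/- Let A = [a_ij] be the n×n zero-one adjacency matrix (with zero diagonal) of a loopless digraph G on vertices v_1,…,v_n, with out-degrees α_i^+ = Σ_j a_ij and in-degrees α_j^- = Σ_i a_ij, and suppose the degree sequence α = ((α_1^+,α_1^-),…,(α_n^+,α_n^-)) is in positive lexicographic order. Then the following are equivalent: (1) A is the unique zero-one matrix with zero diagonal having row sums (α_1^+,…,α_n^+) and column sums (α_1^-,…,α_n^-); (2) G contains no 2-switch and no induced directed 3-cycle; (3) for every triple of distinct indices i, j, k with i < j, a_jk = 1 implies a_ik = 1; (4) for every k with 1 ≤ k ≤ n, Σ_{i=1}^k min(α_i^-, k−1) + Σ_{i=k+1}^n min(α_i^-, k) = Σ_{i=1}^k α_i^+. -/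
section ThresholdHelpers

variable {n : ℕ}

/-- Sum over `Fin n` of two functions agreeing off a pair. -/
lemma sum_eq_of_eq_off_pair {x z : Fin n} (hxz : x ≠ z) (f g : Fin n → ℕ)
    (h : ∀ b, b ≠ x → b ≠ z → f b = g b) (hsum : f x + f z = g x + g z) :
    ∑ b, f b = ∑ b, g b := by
  classical
  have key : ∀ F : Fin n → ℕ,
      ∑ b, F b = F x + (F z + ∑ b ∈ (Finset.univ.erase x).erase z, F b) := by
    intro F
    rw [Finset.add_sum_erase _ F (by simp [hxz.symm]), Finset.add_sum_erase _ F (by simp)]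
  rw [key f, key g, ← add_assoc, ← add_assoc, hsum]
  congr 1
  refine Finset.sum_congr rfl fun b hb => ?_
  simp only [Finset.mem_erase] at hb
  exact h b hb.2.1 hb.1

lemma sum_erase2 (i j : Fin n) (hij : i ≠ j) (f : Fin n → ℕ) :
    ∑ l, f l = f i + f j + ∑ l ∈ (Finset.univ.erase i).erase j, f l := by
  rw [add_assoc, Finset.add_sum_erase _ f (by simp [hij.symm]), Finset.add_sum_erase _ f (by simp)]

lemma sum_erase3 (i j k : Fin n) (hij : i ≠ j) (hik : i ≠ k) (hjk : j ≠ k) (f : Fin n → ℕ) :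
    ∑ l, f l = f i + f j + f k + ∑ l ∈ ((Finset.univ.erase i).erase j).erase k, f l := by
  rw [add_assoc, add_assoc, Finset.add_sum_erase _ f (by simp [hjk.symm, hik.symm]),
    Finset.add_sum_erase _ f (by simp [hij.symm]), Finset.add_sum_erase _ f (by simp)]

lemma prefix_succ (f : Fin n → ℕ) (k : ℕ) (hk : k < n) :
    (∑ i : Fin n, if (i : ℕ) < k + 1 then f i else 0)
      = (∑ i : Fin n, if (i : ℕ) < k then f i else 0) + f ⟨k, hk⟩ := by
  have h : ∀ i : Fin n, (if (i : ℕ) < k + 1 then f i else 0)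
      = (if (i : ℕ) < k then f i else 0) + (if i = ⟨k, hk⟩ then f i else 0) := by
    intro i
    rcases lt_trichotomy (i : ℕ) k with h | h | h
    · have : i ≠ ⟨k, hk⟩ := by simp [Fin.ext_iff]; omega
      simp [h, Nat.lt_succ_of_lt h, this]
    · have : i = ⟨k, hk⟩ := by simp [Fin.ext_iff, h]
      simp [this, h]
    · have h1 : ¬ (i : ℕ) < k + 1 := by omega
      have h2 : ¬ (i : ℕ) < k := by omega
      have : i ≠ ⟨k, hk⟩ := by simp [Fin.ext_iff]; omega
      simp [h1, h2, this]
  rw [Finset.sum_congr rfl fun i _ => h i, Finset.sum_add_distrib, Finset.sum_ite_eq' Finset.univ]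
  simp

lemma prefix_total (f : Fin n → ℕ) (k : ℕ) (hk : n ≤ k) :
    (∑ i : Fin n, if (i : ℕ) < k then f i else 0) = ∑ i, f i := by
  refine Finset.sum_congr rfl fun i _ => ?_
  have : (i : ℕ) < k := lt_of_lt_of_le i.isLt hk
  simp [this]

lemma count_lt (k : ℕ) (hk : k ≤ n) :
    (∑ i : Fin n, if (i : ℕ) < k then 1 else 0) = k := by
  induction k with
  | zero => simp
  | succ k ih =>
    rw [prefix_succ (fun _ => 1) k (by omega), ih (by omega)]

lemma count_ne (j : Fin n) (k : ℕ) (hk : k ≤ n) :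
    (∑ i : Fin n, if (i : ℕ) < k then (if i = j then 0 else 1) else 0)
      = k - (if (j : ℕ) < k then 1 else 0) := by
  have h : ∀ i : Fin n, (if (i : ℕ) < k then (1 : ℕ) else 0)
      = (if (i : ℕ) < k then (if i = j then 0 else 1) else 0)
        + (if i = j then (if (j : ℕ) < k then 1 else 0) else 0) := by
    intro i
    by_cases hij : i = j
    · subst hij; by_cases h2 : (i : ℕ) < k <;> simp [h2]
    · simp [hij]
  have hc := count_lt (n := n) k hk
  rw [Finset.sum_congr rfl (fun i _ => h i), Finset.sum_add_distrib,
    Finset.sum_ite_eq' Finset.univ] at hc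
  simp only [Finset.mem_univ, if_true] at hc
  omega

lemma colcnt_le_min {C : Fin n → Fin n → ℕ} (h01 : ZeroOne n C) (hdiag : ZeroDiag n C)
    (k : ℕ) (hk : k ≤ n) (j : Fin n) :
    (∑ i : Fin n, if (i : ℕ) < k then C i j else 0)
      ≤ min (indeg n C j) (k - if (j : ℕ) < k then 1 else 0) := by
  refine le_min ?_ ?_
  · exact Finset.sum_le_sum fun i _ => by by_cases h : (i : ℕ) < k <;> simp [h]
  · rw [← count_ne j k hk]
    refine Finset.sum_le_sum fun i _ => ?_
    by_cases h : (i : ℕ) < k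
    · by_cases hij : i = j
      · subst hij; simp [h, hdiag i]
      · simp only [h, if_true, hij, if_false]
        rcases h01 i j with h1 | h1 <;> omega
    · simp [h]

lemma sum_colcnt (C : Fin n → Fin n → ℕ) (k : ℕ) :
    (∑ j : Fin n, ∑ i : Fin n, if (i : ℕ) < k then C i j else 0)
      = ∑ i : Fin n, if (i : ℕ) < k then outdeg n C i else 0 := by
  rw [Finset.sum_comm]
  refine Finset.sum_congr rfl fun i _ => ?_
  by_cases h : (i : ℕ) < k <;> simp [h, outdeg]

lemma colcnt_pinned {C : Fin n → Fin n → ℕ} (h01 : ZeroOne n C) (hdiag : ZeroDiag n C)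
    (m p : Fin n → ℕ) (hm : ∀ j, indeg n C j = m j) (hp : ∀ i, outdeg n C i = p i)
    (h4 : ∀ k : ℕ, 1 ≤ k → k ≤ n →
      (∑ i : Fin n, if (i : ℕ) < k then min (m i) (k - 1) else min (m i) k)
        = ∑ i : Fin n, if (i : ℕ) < k then p i else 0)
    (k : ℕ) (hk : k ≤ n) (j : Fin n) :
    (∑ i : Fin n, if (i : ℕ) < k then C i j else 0)
      = min (m j) (k - if (j : ℕ) < k then 1 else 0) := by
  rcases Nat.eq_zero_or_pos k with rfl | hk1
  · simp
  have hle : ∀ j : Fin n, (∑ i : Fin n, if (i : ℕ) < k then C i j else 0)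
      ≤ min (m j) (k - if (j : ℕ) < k then 1 else 0) :=
    fun j => hm j ▸ colcnt_le_min h01 hdiag k hk j
  have hsum : (∑ j : Fin n, ∑ i : Fin n, if (i : ℕ) < k then C i j else 0)
      = ∑ j : Fin n, min (m j) (k - if (j : ℕ) < k then 1 else 0) := by
    rw [sum_colcnt]
    have e1 : (∑ i : Fin n, if (i : ℕ) < k then outdeg n C i else 0)
        = ∑ i : Fin n, if (i : ℕ) < k then p i else 0 :=
      Finset.sum_congr rfl fun i _ => by by_cases h : (i : ℕ) < k <;> simp [h, hp]
    have e2 : (∑ i : Fin n, if (i : ℕ) < k then min (m i) (k - 1) else min (m i) k)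
        = ∑ j : Fin n, min (m j) (k - if (j : ℕ) < k then 1 else 0) :=
      Finset.sum_congr rfl fun j _ => by by_cases h : (j : ℕ) < k <;> simp [h]
    rw [e1, ← h4 k hk1 hk, e2]
  exact (Finset.sum_eq_sum_iff_of_le fun j _ => hle j).mp hsum j (Finset.mem_univ j)

lemma nested_colcnt {A : Fin n → Fin n → ℕ} (h01 : ZeroOne n A) (hdiag : ZeroDiag n A)
    (h3 : Nested n A) (k : ℕ) (hk : k ≤ n) (j : Fin n) :
    (∑ i : Fin n, if (i : ℕ) < k then A i j else 0)
      = min (indeg n A j) (k - if (j : ℕ) < k then 1 else 0) := by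
  refine le_antisymm (colcnt_le_min h01 hdiag k hk j) ?_
  by_cases hT : ∃ i0 : Fin n, k ≤ (i0 : ℕ) ∧ A i0 j = 1
  · obtain ⟨i0, hki0, hA1⟩ := hT
    have hi0j : i0 ≠ j := by intro h; rw [h, hdiag j] at hA1; exact one_ne_zero hA1.symm
    calc min (indeg n A j) (k - if (j : ℕ) < k then 1 else 0)
        ≤ k - (if (j : ℕ) < k then 1 else 0) := min_le_right _ _
      _ = ∑ i : Fin n, if (i : ℕ) < k then (if i = j then 0 else 1) else 0 := (count_ne j k hk).symm
      _ ≤ ∑ i : Fin n, if (i : ℕ) < k then A i j else 0 := by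
          refine Finset.sum_le_sum fun i _ => ?_
          by_cases h : (i : ℕ) < k
          · by_cases hij : i = j
            · simp [h, hij]
            · have hii0 : i < i0 := by rw [Fin.lt_def]; omega
              have := h3 i i0 j (Fin.ne_of_lt hii0) hij hi0j hii0 hA1
              simp [h, hij, this]
          · simp [h]
  · push_neg at hT
    have he : (∑ i : Fin n, if (i : ℕ) < k then A i j else 0) = indeg n A j := by
      refine Finset.sum_congr rfl fun i _ => ?_
      by_cases h : (i : ℕ) < k
      · simp [h]
      · have := hT i (by omega)
        rcases h01 i j with h1 | h1
        · simp [h, h1]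
        · exact absurd h1 this
    rw [he]
    exact min_le_left _ _

lemma poslex_mono {p m : Fin n → ℕ} (hlex : PosLex n p m) :
    ∀ d : ℕ, ∀ i j : Fin n, (i : ℕ) + d = (j : ℕ) →
      p j ≤ p i ∧ (p i = p j → m j ≤ m i) := by
  intro d
  induction d with
  | zero =>
    intro i j h
    have : i = j := Fin.ext (by omega)
    subst this; exact ⟨le_rfl, fun _ => le_rfl⟩
  | succ d ih =>
    intro i j h
    have hi1 : (i : ℕ) + 1 < n ∨ (i : ℕ) + 1 = n := by have := j.isLt; omega
    rcases hi1 with hi1 | hi1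
    · set i' : Fin n := ⟨(i : ℕ) + 1, hi1⟩ with hi'
      have h1 := hlex i i' rfl
      have h2 := ih i' j (by simp [hi']; omega)
      refine ⟨h2.1.trans h1.1, fun hpe => ?_⟩
      have e1 : p i = p i' := le_antisymm (hpe ▸ h2.1) h1.1
      exact (h2.2 (e1 ▸ hpe)).trans (h1.2 e1)
    · -- then d = 0 and j = i + 1... cover: i+1 = n means j = i? j < n = i+1 so j ≤ i, and i + d + 1 = j
      exact absurd rfl (by have := j.isLt; omega : ¬ (0:ℕ) = 0)
      
lemma poslex_le {p m : Fin n → ℕ} (hlex : PosLex n p m) {i j : Fin n} (hij : i ≤ j) :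
    p j ≤ p i ∧ (p i = p j → m j ≤ m i) :=
  poslex_mono hlex ((j : ℕ) - (i : ℕ)) i j (by have := Fin.le_def.mp hij; omega)

lemma two_three {A : Fin n → Fin n → ℕ} (h01 : ZeroOne n A) (hdiag : ZeroDiag n A)
    (hlex : PosLex n (outdeg n A) (indeg n A))
    (hsw : ¬ HasTwoSwitch n A) (hc3 : ¬ HasInducedC3 n A) : Nested n A := by
  intro i j k hij hik hjk hlt hjk1
  by_contra hik1
  have hik0 : A i k = 0 := by rcases h01 i k with h | h; exact h; exact absurd h hik1
  have stepA : ∀ l : Fin n, l ≠ i → l ≠ j → l ≠ k → A i l ≤ A j l := by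
    intro l hli hlj hlk
    by_contra hgt
    push_neg at hgt
    have h1 : A i l = 1 := by rcases h01 i l with h | h <;> rcases h01 j l with h' | h' <;> omega
    have h0 : A j l = 0 := by rcases h01 i l with h | h <;> rcases h01 j l with h' | h' <;> omega
    exact hsw ⟨i, l, j, k, hli.symm, hij, hik, hlj, hlk, hjk, h1, hjk1, hik0, h0⟩
  have hpij := (poslex_le hlex hlt.le).1
  have ei : outdeg n A i = A i i + A i j + A i k
      + ∑ l ∈ ((Finset.univ.erase i).erase j).erase k, A i l :=
    sum_erase3 i j k hij hik hjk _
  have ej : outdeg n A j = A j i + A j j + A j k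
      + ∑ l ∈ ((Finset.univ.erase i).erase j).erase k, A j l :=
    sum_erase3 i j k hij hik hjk _
  have hs : (∑ l ∈ ((Finset.univ.erase i).erase j).erase k, A i l)
      ≤ ∑ l ∈ ((Finset.univ.erase i).erase j).erase k, A j l := by
    refine Finset.sum_le_sum fun l hl => ?_
    simp only [Finset.mem_erase, Finset.mem_univ, and_true] at hl
    exact stepA l hl.2.2 hl.2.1 hl.1
  have hAii := hdiag i
  have hAjj := hdiag j
  have h01ij := h01 i j
  have h01ji := h01 j i
  have haij1 : A i j = 1 := by omega
  have haji : A j i = 0 := by omega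
  have hpeq : outdeg n A i = outdeg n A j := by omega
  have hmij := (poslex_le hlex hlt.le).2 hpeq
  have ci : indeg n A i = A i i + A j i + ∑ l ∈ (Finset.univ.erase i).erase j, A l i :=
    sum_erase2 i j hij _
  have cj : indeg n A j = A i j + A j j + ∑ l ∈ (Finset.univ.erase i).erase j, A l j :=
    sum_erase2 i j hij _
  have hex : ∃ l ∈ (Finset.univ.erase i).erase j, A l j < A l i := by
    by_contra hc
    push_neg at hc
    have h2 : (∑ l ∈ (Finset.univ.erase i).erase j, A l i)
        ≤ ∑ l ∈ (Finset.univ.erase i).erase j, A l j :=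
      Finset.sum_le_sum fun l hl => hc l hl
    omega
  obtain ⟨l, hl, hll⟩ := hex
  simp only [Finset.mem_erase, Finset.mem_univ, and_true] at hl
  have hli1 : A l i = 1 := by rcases h01 l i with h | h <;> omega
  have hlj0 : A l j = 0 := by rcases h01 l j with h | h <;> omega
  by_cases hlk : l = k
  · subst hlk
    exact hc3 ⟨i, j, l, hij, hik, hjk, haij1, hjk1, hli1, haji, hlj0, hik0⟩
  · rcases h01 l k with h | h
    · exact hsw ⟨l, i, j, k, hl.2, hl.1, hlk, hij, hik, hjk, hli1, hjk1, h, haji⟩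
    · exact hsw ⟨l, k, i, j, hlk, hl.2, hl.1, hik.symm, hjk.symm, hij, h, haij1, hlj0, hik0⟩

lemma one_two {A : Fin n → Fin n → ℕ} (h01 : ZeroOne n A) (hdiag : ZeroDiag n A)
    (hU : UniqueRealization n A) : ¬ HasTwoSwitch n A ∧ ¬ HasInducedC3 n A := by
  constructor
  · rintro ⟨w, x, y, z, hwx, hwy, hwz, hxy, hxz, hyz, hAwx, hAyz, hAwz, hAyx⟩
    set B : Fin n → Fin n → ℕ := fun a b =>
      if a = w ∧ b = x then 0 else if a = y ∧ b = z then 0 else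
      if a = w ∧ b = z then 1 else if a = y ∧ b = x then 1 else A a b with hB
    have hB01 : ZeroOne n B := by
      intro a b
      simp only [hB]
      split_ifs <;> first | simp | exact h01 a b
    have hBdiag : ZeroDiag n B := by
      intro a
      simp only [hB]
      split_ifs with h1 h2 h3 h4
      · exact absurd (h1.1.symm.trans h1.2) hwx
      · exact absurd (h2.1.symm.trans h2.2) hyz
      · exact absurd (h3.1.symm.trans h3.2) hwz
      · exact absurd (h4.1.symm.trans h4.2) hxy.symm
      · exact hdiag a
    have hout : ∀ a, outdeg n B a = outdeg n A a := by
      intro a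
      by_cases haw : a = w
      · subst haw
        refine sum_eq_of_eq_off_pair hxz (fun b => B a b) (fun b => A a b) ?_ ?_
        · intro b hbx hbz; simp [hB, hwx, hwy, hwz, hxy, hxz, hyz, Ne.symm hwx, Ne.symm hwy, Ne.symm hwz, Ne.symm hxy, Ne.symm hxz, Ne.symm hyz, hAwx, hAyz, hAwz, hAyx, *]
        · simp [hB, hwx, hwy, hwz, hxy, hxz, hyz, Ne.symm hwx, Ne.symm hwy, Ne.symm hwz, Ne.symm hxy, Ne.symm hxz, Ne.symm hyz, hAwx, hAyz, hAwz, hAyx, *]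
      by_cases hay : a = y
      · subst hay
        refine sum_eq_of_eq_off_pair hxz (fun b => B a b) (fun b => A a b) ?_ ?_
        · intro b hbx hbz; simp [hB, hwx, hwy, hwz, hxy, hxz, hyz, Ne.symm hwx, Ne.symm hwy, Ne.symm hwz, Ne.symm hxy, Ne.symm hxz, Ne.symm hyz, hAwx, hAyz, hAwz, hAyx, *]
        · simp [hB, hwx, hwy, hwz, hxy, hxz, hyz, Ne.symm hwx, Ne.symm hwy, Ne.symm hwz, Ne.symm hxy, Ne.symm hxz, Ne.symm hyz, hAwx, hAyz, hAwz, hAyx, *]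
      · exact Finset.sum_congr rfl fun b _ => by simp [hB, hwx, hwy, hwz, hxy, hxz, hyz, Ne.symm hwx, Ne.symm hwy, Ne.symm hwz, Ne.symm hxy, Ne.symm hxz, Ne.symm hyz, hAwx, hAyz, hAwz, hAyx, *]
    have hin : ∀ b, indeg n B b = indeg n A b := by
      intro b
      by_cases hbx : b = x
      · subst hbx
        refine sum_eq_of_eq_off_pair hwy (fun a => B a b) (fun a => A a b) ?_ ?_
        · intro a haw hay; simp [hB, hwx, hwy, hwz, hxy, hxz, hyz, Ne.symm hwx, Ne.symm hwy, Ne.symm hwz, Ne.symm hxy, Ne.symm hxz, Ne.symm hyz, hAwx, hAyz, hAwz, hAyx, *]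
        · simp [hB, hwx, hwy, hwz, hxy, hxz, hyz, Ne.symm hwx, Ne.symm hwy, Ne.symm hwz, Ne.symm hxy, Ne.symm hxz, Ne.symm hyz, hAwx, hAyz, hAwz, hAyx, *]
      by_cases hbz : b = z
      · subst hbz
        refine sum_eq_of_eq_off_pair hwy (fun a => B a b) (fun a => A a b) ?_ ?_
        · intro a haw hay; simp [hB, hwx, hwy, hwz, hxy, hxz, hyz, Ne.symm hwx, Ne.symm hwy, Ne.symm hwz, Ne.symm hxy, Ne.symm hxz, Ne.symm hyz, hAwx, hAyz, hAwz, hAyx, *]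
        · simp [hB, hwx, hwy, hwz, hxy, hxz, hyz, Ne.symm hwx, Ne.symm hwy, Ne.symm hwz, Ne.symm hxy, Ne.symm hxz, Ne.symm hyz, hAwx, hAyz, hAwz, hAyx, *]
      · exact Finset.sum_congr rfl fun a _ => by simp [hB, hwx, hwy, hwz, hxy, hxz, hyz, Ne.symm hwx, Ne.symm hwy, Ne.symm hwz, Ne.symm hxy, Ne.symm hxz, Ne.symm hyz, hAwx, hAyz, hAwz, hAyx, *]
    have hBA := hU B hB01 hBdiag hout hin
    have : B w x = A w x := by rw [hBA]
    simp [hB, hwx, hwy, hwz, hxy, hxz, hyz, Ne.symm hwx, Ne.symm hwy, Ne.symm hwz, Ne.symm hxy, Ne.symm hxz, Ne.symm hyz, hAwx, hAyz, hAwz, hAyx, *] at this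
  · rintro ⟨x, y, z, hxy, hxz, hyz, hAxy, hAyz, hAzx, hAyx, hAzy, hAxz⟩
    set B : Fin n → Fin n → ℕ := fun a b =>
      if a = x ∧ b = y then 0 else if a = y ∧ b = z then 0 else
      if a = z ∧ b = x then 0 else if a = y ∧ b = x then 1 else
      if a = z ∧ b = y then 1 else if a = x ∧ b = z then 1 else A a b with hB
    have hB01 : ZeroOne n B := by
      intro a b
      simp only [hB]
      split_ifs <;> first | simp | exact h01 a b
    have hBdiag : ZeroDiag n B := by
      intro a
      simp only [hB]
      split_ifs with h1 h2 h3 h4 h5 h6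
      · exact absurd (h1.1.symm.trans h1.2) hxy
      · exact absurd (h2.1.symm.trans h2.2) hyz
      · exact absurd (h3.1.symm.trans h3.2) hxz.symm
      · exact absurd (h4.1.symm.trans h4.2) hxy.symm
      · exact absurd (h5.1.symm.trans h5.2) hyz.symm
      · exact absurd (h6.1.symm.trans h6.2) hxz
      · exact hdiag a
    have hout : ∀ a, outdeg n B a = outdeg n A a := by
      intro a
      by_cases hax : a = x
      · subst hax
        refine sum_eq_of_eq_off_pair hyz (fun b => B a b) (fun b => A a b) ?_ ?_
        · intro b hby hbz; simp [hB, hxy, hxz, hyz, Ne.symm hxy, Ne.symm hxz, Ne.symm hyz, hAxy, hAyz, hAzx, hAyx, hAzy, hAxz, *]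
        · simp [hB, hxy, hxz, hyz, Ne.symm hxy, Ne.symm hxz, Ne.symm hyz, hAxy, hAyz, hAzx, hAyx, hAzy, hAxz, *]
      by_cases hay : a = y
      · subst hay
        refine sum_eq_of_eq_off_pair hxz (fun b => B a b) (fun b => A a b) ?_ ?_
        · intro b hbx hbz; simp [hB, hxy, hxz, hyz, Ne.symm hxy, Ne.symm hxz, Ne.symm hyz, hAxy, hAyz, hAzx, hAyx, hAzy, hAxz, *]
        · simp [hB, hxy, hxz, hyz, Ne.symm hxy, Ne.symm hxz, Ne.symm hyz, hAxy, hAyz, hAzx, hAyx, hAzy, hAxz, *]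
      by_cases haz : a = z
      · subst haz
        refine sum_eq_of_eq_off_pair hxy (fun b => B a b) (fun b => A a b) ?_ ?_
        · intro b hbx hby; simp [hB, hxy, hxz, hyz, Ne.symm hxy, Ne.symm hxz, Ne.symm hyz, hAxy, hAyz, hAzx, hAyx, hAzy, hAxz, *]
        · simp [hB, hxy, hxz, hyz, Ne.symm hxy, Ne.symm hxz, Ne.symm hyz, hAxy, hAyz, hAzx, hAyx, hAzy, hAxz, *]
      · exact Finset.sum_congr rfl fun b _ => by simp [hB, hxy, hxz, hyz, Ne.symm hxy, Ne.symm hxz, Ne.symm hyz, hAxy, hAyz, hAzx, hAyx, hAzy, hAxz, *]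
    have hin : ∀ b, indeg n B b = indeg n A b := by
      intro b
      by_cases hbx : b = x
      · subst hbx
        refine sum_eq_of_eq_off_pair hyz (fun a => B a b) (fun a => A a b) ?_ ?_
        · intro a hay haz; simp [hB, hxy, hxz, hyz, Ne.symm hxy, Ne.symm hxz, Ne.symm hyz, hAxy, hAyz, hAzx, hAyx, hAzy, hAxz, *]
        · simp [hB, hxy, hxz, hyz, Ne.symm hxy, Ne.symm hxz, Ne.symm hyz, hAxy, hAyz, hAzx, hAyx, hAzy, hAxz, *]
      by_cases hby : b = y
      · subst hby
        refine sum_eq_of_eq_off_pair hxz (fun a => B a b) (fun a => A a b) ?_ ?_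
        · intro a hax haz; simp [hB, hxy, hxz, hyz, Ne.symm hxy, Ne.symm hxz, Ne.symm hyz, hAxy, hAyz, hAzx, hAyx, hAzy, hAxz, *]
        · simp [hB, hxy, hxz, hyz, Ne.symm hxy, Ne.symm hxz, Ne.symm hyz, hAxy, hAyz, hAzx, hAyx, hAzy, hAxz, *]
      by_cases hbz : b = z
      · subst hbz
        refine sum_eq_of_eq_off_pair hxy (fun a => B a b) (fun a => A a b) ?_ ?_
        · intro a hax hay; simp [hB, hxy, hxz, hyz, Ne.symm hxy, Ne.symm hxz, Ne.symm hyz, hAxy, hAyz, hAzx, hAyx, hAzy, hAxz, *]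
        · simp [hB, hxy, hxz, hyz, Ne.symm hxy, Ne.symm hxz, Ne.symm hyz, hAxy, hAyz, hAzx, hAyx, hAzy, hAxz, *]
      · exact Finset.sum_congr rfl fun a _ => by simp [hB, hxy, hxz, hyz, Ne.symm hxy, Ne.symm hxz, Ne.symm hyz, hAxy, hAyz, hAzx, hAyx, hAzy, hAxz, *]
    have hBA := hU B hB01 hBdiag hout hin
    have : B x y = A x y := by rw [hBA]
    simp [hB, hxy, hxz, hyz, Ne.symm hxy, Ne.symm hxz, Ne.symm hyz, hAxy, hAyz, hAzx, hAyx, hAzy, hAxz, *] at this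

end ThresholdHelpers

/-- Theorem 1: the four characterizations of threshold digraphs are
equivalent, for a digraph whose degree sequence is in positive lexicographic order. -/
theorem stmt4 (n : ℕ) (A : Fin n → Fin n → ℕ)
    (h01 : ZeroOne n A) (hdiag : ZeroDiag n A)
    (hlex : PosLex n (outdeg n A) (indeg n A)) :
    [UniqueRealization n A,
     ¬ HasTwoSwitch n A ∧ ¬ HasInducedC3 n A,
     Nested n A,
     ∀ k : ℕ, 1 ≤ k → k ≤ n →
       (∑ i : Fin n, if (i : ℕ) < k then min (indeg n A i) (k - 1) else min (indeg n A i) k)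
         = ∑ i : Fin n, if (i : ℕ) < k then outdeg n A i else 0].TFAE := by
  tfae_have 1 → 2 := fun hU => one_two h01 hdiag hU
  tfae_have 2 → 3 := fun h => two_three h01 hdiag hlex h.1 h.2
  tfae_have 3 → 4 := by
    intro h3 k hk1 hkn
    rw [← sum_colcnt A k]
    refine Finset.sum_congr rfl fun j _ => ?_
    rw [nested_colcnt h01 hdiag h3 k hkn j]
    by_cases h : (j : ℕ) < k <;> simp [h]
  tfae_have 4 → 1 := by
    intro h4 B hB01 hBdiag hout hin
    have hA := colcnt_pinned h01 hdiag (indeg n A) (outdeg n A) (fun _ => rfl) (fun _ => rfl) h4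
    have hBp := colcnt_pinned hB01 hBdiag (indeg n A) (outdeg n A) hin hout h4
    funext i j
    have e1 := prefix_succ (fun l => B l j) (i : ℕ) i.isLt
    have e2 := prefix_succ (fun l => A l j) (i : ℕ) i.isLt
    simp only [Fin.eta] at e1 e2
    rw [hBp ((i : ℕ) + 1) i.isLt j, hBp (i : ℕ) (le_of_lt i.isLt) j] at e1
    rw [hA ((i : ℕ) + 1) i.isLt j, hA (i : ℕ) (le_of_lt i.isLt) j] at e2
    omega
  tfae_finish
end

section
/- Let A = [a_ij] be the n×n zero-one adjacency matrix (with zero diagonal) of a loopless digraph G on vertices v_1,…,v_n (with no ordering assumption on the degree sequence). If for every triple of distinct indices i, j, k with i < j, a_jk = 1 implies a_ik = 1, then G contains no 2-switch and no induced directed 3-cycle (i.e., G is a threshold digraph). -/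
/-- Corollary 1: the nesting condition implies that `G` is threshold,
with no ordering assumption on the degree sequence. -/
theorem stmt5 (n : ℕ) (A : Fin n → Fin n → ℕ)
    (h01 : ZeroOne n A) (hdiag : ZeroDiag n A)
    (hnest : Nested n A) :
    ¬ HasTwoSwitch n A ∧ ¬ HasInducedC3 n A := by
  constructor
  · rintro ⟨w, x, y, z, hwx, hwy, hwz, hxy, hxz, hyz, awx, ayz, awz, ayx⟩
    rcases lt_or_gt_of_ne hwy with h | h
    · have := hnest w y z hwy hwz hyz h ayz
      omega
    · have := hnest y w x hwy.symm (Ne.symm hxy) hwx h awx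
      omega
  · rintro ⟨x, y, z, hxy, hxz, hyz, axy, ayz, azx, ayx, azy, axz⟩
    rcases lt_or_gt_of_ne hxy with h | h
    · have := hnest x y z hxy hxz hyz h ayz
      omega
    · rcases lt_or_gt_of_ne hxz with h2 | h2
      · have hyltz : y < z := lt_trans h h2
        have := hnest y z x hyz (Ne.symm hxy) (Ne.symm hxz) hyltz azx
        omega
      · have := hnest z x y (Ne.symm hxz) (Ne.symm hyz) hxy h2 axy
        omega
end

section
/- Given a sequence β = (β_1,…,β_n) of integers with 0 ≤ β_j < n for all j, define the n×n matrix A = [a_ij] by a_ij = 1 if (i < j and i ≤ β_j) or (i > j and i ≤ β_j + 1), and a_ij = 0 otherwise. Then A is a zero-one matrix with zero diagonal which is the adjacency matrix of a threshold digraph, i.e., the digraph it defines has no 2-switch and no induced directed 3-cycle. -/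
/-- Corollary 2, first part: the matrix constructed from a sequence
`β` with `0 ≤ β j < n` (here via the 0-based translation of the 1-based rule
`a_{ij} = 1` iff (`i < j` and `i ≤ β_j`) or (`i > j` and `i ≤ β_j + 1`))
is the adjacency matrix of a threshold digraph. -/
theorem stmt6 (n : ℕ) (β : Fin n → ℕ) (hβ : ∀ j, β j < n)
    (A : Fin n → Fin n → ℕ)
    (hA : ∀ i j : Fin n, A i j =
      if ((i : ℕ) < (j : ℕ) ∧ (i : ℕ) < β j) ∨ ((j : ℕ) < (i : ℕ) ∧ (i : ℕ) ≤ β j)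
      then 1 else 0) :
    ZeroOne n A ∧ ZeroDiag n A ∧ ¬ HasTwoSwitch n A ∧ ¬ HasInducedC3 n A := by
  have hnest : ∀ i i' j : Fin n, (i : ℕ) < (i' : ℕ) → i ≠ j → A i' j = 1 → A i j = 1 := by
    intro i i' j hlt hij h1
    have hij' : (i : ℕ) ≠ (j : ℕ) := fun h => hij (Fin.ext h)
    rw [hA] at h1 ⊢
    split at h1
    · rename_i h
      rw [if_pos]
      omega
    · omega
  refine ⟨?_, ?_, ?_, ?_⟩
  · intro i j; rw [hA]; split <;> simp
  · intro i; rw [hA]; simp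
  · rintro ⟨w, x, y, z, hwx, hwy, hwz, hxy, hxz, hyz, h1, h2, h3, h4⟩
    rcases lt_or_gt_of_ne (fun h : (w : ℕ) = (y : ℕ) => hwy (Fin.ext h)) with h | h
    · have := hnest w y z h hwz h2; omega
    · have := hnest y w x h hxy.symm h1; omega
  · rintro ⟨x, y, z, hxy, hxz, hyz, h1, h2, h3, h4, h5, h6⟩
    have e1 : (y : ℕ) < (x : ℕ) := by
      rcases lt_or_gt_of_ne (fun h : (x : ℕ) = (y : ℕ) => hxy (Fin.ext h)) with h | h
      · have := hnest x y z h hxz h2; omega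
      · exact h
    have e2 : (x : ℕ) < (z : ℕ) := by
      rcases lt_or_gt_of_ne (fun h : (z : ℕ) = (x : ℕ) => hxz (Fin.ext h.symm)) with h | h
      · have := hnest z x y h hyz.symm h1; omega
      · exact h
    have e3 : (z : ℕ) < (y : ℕ) := by
      rcases lt_or_gt_of_ne (fun h : (y : ℕ) = (z : ℕ) => hyz (Fin.ext h)) with h | h
      · have := hnest y z x h (Ne.symm hxy) h3; omega
      · exact h
    omega
end

section
/- Let A = [a_ij] be the n×n zero-one adjacency matrix (with zero diagonal) of a threshold digraph G on vertices v_1,…,v_n with in-degrees α_j^- = Σ_i a_ij, and suppose for every triple of distinct indices i, j, k with i < j, a_jk = 1 implies a_ik = 1. Then A equals the matrix constructed from the sequence β = (α_1^-,…,α_n^-) by the rule a_ij = 1 if (i < j and i ≤ β_j) or (i > j and i ≤ β_j + 1), and a_ij = 0 otherwise; in other words, A is the unique zero-one matrix with zero diagonal satisfying that adjacency condition and having column sums α_1^-,…,α_n^-. -/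
lemma downClosed_mem (T : Finset ℕ) (hdc : ∀ a b, a ≤ b → b ∈ T → a ∈ T) (a : ℕ) :
    a ∈ T ↔ a < T.card := by
  constructor
  · intro ha
    have hsub : Finset.range (a + 1) ⊆ T := by
      intro x hx
      exact hdc x a (Nat.lt_succ_iff.mp (Finset.mem_range.mp hx)) ha
    have := Finset.card_le_card hsub
    simpa using this
  · intro ha
    by_contra h
    have hsub : T ⊆ Finset.range a := by
      intro b hb
      rw [Finset.mem_range]
      by_contra hba
      exact h (hdc a b (le_of_not_gt hba) hb)
    have := Finset.card_le_card hsub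
    simp at this
    omega


lemma key (n : ℕ) (A : Fin n → Fin n → ℕ)
    (h01 : ZeroOne n A) (hdiag : ZeroDiag n A) (hnest : Nested n A) (i j : Fin n) :
    A i j = if ((i : ℕ) < (j : ℕ) ∧ (i : ℕ) < indeg n A j) ∨
         ((j : ℕ) < (i : ℕ) ∧ (i : ℕ) ≤ indeg n A j) then 1 else 0 := by
  classical
  set pos : Fin n → ℕ := fun i => if (i : ℕ) < (j : ℕ) then (i : ℕ) else (i : ℕ) - 1 with hpos
  set S : Finset (Fin n) := Finset.univ.filter (fun i => A i j = 1) with hS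
  -- pos injective off j
  have hinj : ∀ i1 i2 : Fin n, i1 ≠ j → i2 ≠ j → pos i1 = pos i2 → i1 = i2 := by
    intro i1 i2 h1 h2 he
    have h1' : (i1 : ℕ) ≠ (j : ℕ) := fun h => h1 (Fin.ext h)
    have h2' : (i2 : ℕ) ≠ (j : ℕ) := fun h => h2 (Fin.ext h)
    apply Fin.ext
    simp only [hpos] at he
    split_ifs at he <;> omega
  have hmono : ∀ i1 i2 : Fin n, i1 ≠ j → i2 ≠ j → pos i1 < pos i2 → (i1 : ℕ) < (i2 : ℕ) := by
    intro i1 i2 h1 h2 he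
    have h1' : (i1 : ℕ) ≠ (j : ℕ) := fun h => h1 (Fin.ext h)
    have h2' : (i2 : ℕ) ≠ (j : ℕ) := fun h => h2 (Fin.ext h)
    simp only [hpos] at he
    split_ifs at he <;> omega
  have hmemS : ∀ i : Fin n, i ∈ S ↔ A i j = 1 := by
    intro i; simp [hS]
  have hneS : ∀ i : Fin n, i ∈ S → i ≠ j := by
    intro i hi hij
    rw [hmemS] at hi
    rw [hij, hdiag j] at hi
    exact absurd hi (by norm_num)
  have hd : indeg n A j = S.card := by
    rw [hS, Finset.card_filter]
    unfold indeg
    apply Finset.sum_congr rfl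
    intro i _
    rcases h01 i j with h | h <;> simp [h]
  set T : Finset ℕ := S.image pos with hT
  have hTcard : T.card = S.card := by
    rw [hT]
    apply Finset.card_image_of_injOn
    intro i1 h1 i2 h2 he
    exact hinj i1 i2 (hneS i1 h1) (hneS i2 h2) he
  have hdc : ∀ a b, a ≤ b → b ∈ T → a ∈ T := by
    intro a b hab hb
    rcases Finset.mem_image.mp hb with ⟨x, hx, hxb⟩
    rcases eq_or_lt_of_le hab with rfl | halt
    · exact hb
    subst hxb
    have hxj : x ≠ j := hneS x hx
    have hxj' : (x : ℕ) ≠ (j : ℕ) := fun h => hxj (Fin.ext h)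
    have hposx : pos x ≤ (x : ℕ) := by simp only [hpos]; split_ifs <;> omega
    have hi'lt : (if a < (j : ℕ) then a else a + 1) < n := by
      have := j.isLt
      have := x.isLt
      split_ifs <;> omega
    set i' : Fin n := ⟨if a < (j : ℕ) then a else a + 1, hi'lt⟩ with hi'
    have hi'j : (i' : ℕ) ≠ (j : ℕ) := by simp only [hi']; split_ifs <;> omega
    have hi'j2 : i' ≠ j := fun h => hi'j (by rw [h])
    have hposi' : pos i' = a := by
      simp only [hpos, hi']
      split_ifs <;> omega
    have hlt : (i' : ℕ) < (x : ℕ) := hmono i' x hi'j2 hxj (by rw [hposi']; exact halt)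
    have hi'x : i' ≠ x := fun h => by rw [h] at hlt; omega
    have : A i' j = 1 := hnest i' x j hi'x hi'j2 hxj hlt ((hmemS x).mp hx)
    exact Finset.mem_image.mpr ⟨i', (hmemS i').mpr this, hposi'⟩
  have hchar : ∀ x : Fin n, x ≠ j → (A x j = 1 ↔ pos x < indeg n A j) := by
    intro x hxj
    rw [hd, ← hTcard, ← downClosed_mem T hdc]
    constructor
    · intro h
      exact Finset.mem_image.mpr ⟨x, (hmemS x).mpr h, rfl⟩
    · intro h
      rcases Finset.mem_image.mp h with ⟨y, hy, hxy⟩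
      have := hinj y x (hneS y hy) hxj hxy
      subst this
      exact (hmemS y).mp hy
  by_cases hij : i = j
  · subst hij
    rw [hdiag i]
    rw [if_neg]
    rintro (⟨h, -⟩ | ⟨h, -⟩) <;> omega
  · have hij' : (i : ℕ) ≠ (j : ℕ) := fun h => hij (Fin.ext h)
    have hc := hchar i hij
    have hposi : pos i = if (i : ℕ) < (j : ℕ) then (i : ℕ) else (i : ℕ) - 1 := rfl
    rcases h01 i j with h | h
    · rw [h, if_neg]
      intro hcond
      have : pos i < indeg n A j := by
        rw [hposi]; split_ifs with hh
        · rcases hcond with ⟨-, h2⟩ | ⟨h1, -⟩ <;> omega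
        · rcases hcond with ⟨h1, -⟩ | ⟨-, h2⟩ <;> omega
      have := hc.mpr this
      omega
    · rw [h, if_pos]
      have hp := hc.mp h
      rw [hposi] at hp
      split_ifs at hp with hh
      · left; exact ⟨hh, hp⟩
      · right; constructor <;> omega


/-- Corollary 2, second part: a threshold digraph satisfying the nesting
condition equals the matrix constructed from the sequence of its in-degrees; it is the
unique zero-one zero-diagonal matrix satisfying the nesting condition with those
column sums. -/
theorem stmt7 (n : ℕ) (A : Fin n → Fin n → ℕ)
    (h01 : ZeroOne n A) (hdiag : ZeroDiag n A)
    (hsw : ¬ HasTwoSwitch n A) (hc3 : ¬ HasInducedC3 n A)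
    (hnest : Nested n A) :
    (∀ i j : Fin n, A i j =
      if ((i : ℕ) < (j : ℕ) ∧ (i : ℕ) < indeg n A j) ∨
         ((j : ℕ) < (i : ℕ) ∧ (i : ℕ) ≤ indeg n A j)
      then 1 else 0) ∧
    (∀ B : Fin n → Fin n → ℕ, ZeroOne n B → ZeroDiag n B → Nested n B →
      (∀ j, indeg n B j = indeg n A j) → B = A) := by
  constructor
  · exact fun i j => key n A h01 hdiag hnest i j
  · intro B hB01 hBdiag hBnest hBdeg
    funext i j
    rw [key n A h01 hdiag hnest i j, key n B hB01 hBdiag hBnest i j, hBdeg j]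
end

section
/- Let TD(n) denote the number of isomorphism classes of threshold digraphs on n vertices. Then n^n / n! ≤ TD(n) ≤ n^n; equivalently, n^n ≤ n! · TD(n) and TD(n) ≤ n^n. -/
/-- Threshold digraphs on `n` vertices, as zero-diagonal boolean adjacency matrices
with no 2-switch and no induced directed 3-cycle. -/
def IsThresholdB (n : ℕ) (A : Fin n → Fin n → Bool) : Prop :=
  (∀ i, A i i = false) ∧
  (¬ ∃ w x y z : Fin n, w ≠ x ∧ w ≠ y ∧ w ≠ z ∧ x ≠ y ∧ x ≠ z ∧ y ≠ z ∧
      A w x = true ∧ A y z = true ∧ A w z = false ∧ A y x = false) ∧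
  (¬ ∃ x y z : Fin n, x ≠ y ∧ x ≠ z ∧ y ≠ z ∧
      A x y = true ∧ A y z = true ∧ A z x = true ∧
      A y x = false ∧ A z y = false ∧ A x z = false)

/-- Isomorphism of threshold digraphs: a permutation of the vertices carrying the
arcs of one onto the arcs of the other. -/
def ThresholdIso (n : ℕ)
    (A B : {M : Fin n → Fin n → Bool // IsThresholdB n M}) : Prop :=
  ∃ σ : Equiv.Perm (Fin n), ∀ i j, A.1 (σ i) (σ j) = B.1 i j

namespace Stmt8aux

open Finset

/-- threshold value associated to `f` -/
def tfun (n : ℕ) (f : Fin n → Fin n) (k : Fin n) : ℕ :=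
  if (f k : ℕ) ≤ (k : ℕ) then (f k : ℕ) else (f k : ℕ) + 1

/-- canonical threshold digraph of `f` -/
def Af (n : ℕ) (f : Fin n → Fin n) : Fin n → Fin n → Bool :=
  fun i k => decide ((i : ℕ) < tfun n f k ∧ i ≠ k)

lemma tfun_le (n : ℕ) (f : Fin n → Fin n) (k : Fin n) : tfun n f k ≤ n := by
  unfold tfun; have := (f k).isLt; split <;> omega

lemma tfun_ne (n : ℕ) (f : Fin n → Fin n) (k : Fin n) : tfun n f k ≠ (k : ℕ) + 1 := by
  unfold tfun; have := k.isLt; split <;> omega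

lemma Af_true_iff {n : ℕ} {f : Fin n → Fin n} {i k : Fin n} :
    Af n f i k = true ↔ ((i : ℕ) < tfun n f k ∧ i ≠ k) := by
  simp [Af]

lemma Af_false_le {n : ℕ} {f : Fin n → Fin n} {i k : Fin n}
    (h : Af n f i k = false) (hik : i ≠ k) : tfun n f k ≤ (i : ℕ) := by
  by_contra hc
  have : Af n f i k = true := Af_true_iff.mpr ⟨by omega, hik⟩
  rw [this] at h; exact Bool.true_eq_false_eq_False h

lemma Af_threshold (n : ℕ) (f : Fin n → Fin n) : IsThresholdB n (Af n f) := by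
  refine ⟨fun i => by simp [Af], ?_, ?_⟩
  · rintro ⟨w, x, y, z, hwx, hwy, hwz, hxy, hxz, hyz, h1, h2, h3, h4⟩
    have e1 := (Af_true_iff.mp h1).1
    have e2 := (Af_true_iff.mp h2).1
    have e3 := Af_false_le h3 hwz
    have e4 := Af_false_le h4 (Ne.symm hxy)
    omega
  · rintro ⟨x, y, z, hxy, hxz, hyz, h1, h2, h3, h4, h5, h6⟩
    have e1 := (Af_true_iff.mp h1).1
    have e2 := (Af_true_iff.mp h2).1
    have e3 := (Af_true_iff.mp h3).1
    have e4 := Af_false_le h4 (Ne.symm hxy)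
    have e5 := Af_false_le h5 (Ne.symm hyz)
    have e6 := Af_false_le h6 hxz
    omega

lemma tfun_inj {n : ℕ} {f g : Fin n → Fin n} (h : Af n f = Af n g) (k : Fin n) :
    tfun n f k = tfun n g k := by
  -- wlog style: prove no strict inequality either way
  have key : ∀ f g : Fin n → Fin n, Af n f = Af n g →
      tfun n f k < tfun n g k → False := by
    intro f g h hlt
    have hgle := tfun_le n g k
    have hfle := tfun_le n f k
    by_cases hk : tfun n f k = (k : ℕ)
    · -- then tfun g k ≥ k+2 since ≠ k+1
      have hne := tfun_ne n g k
      have h2 : (k : ℕ) + 2 ≤ tfun n g k := by omega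
      have hklt : (k : ℕ) + 1 < n := by omega
      set i : Fin n := ⟨(k : ℕ) + 1, hklt⟩ with hi
      have hik : i ≠ k := by
        intro hc; have : (i : ℕ) = (k : ℕ) := by rw [hc]
        simp [hi] at this
      have : Af n g i k = true := Af_true_iff.mpr ⟨by simp [hi]; omega, hik⟩
      rw [← h] at this
      have := (Af_true_iff.mp this).1
      simp [hi] at this; omega
    · set i : Fin n := ⟨tfun n f k, by omega⟩ with hi
      have hik : i ≠ k := by
        intro hc; apply hk
        have : (i : ℕ) = (k : ℕ) := by rw [hc]
        simpa [hi] using this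
      have : Af n g i k = true := Af_true_iff.mpr ⟨by simp [hi]; omega, hik⟩
      rw [← h] at this
      have := (Af_true_iff.mp this).1
      simp [hi] at this
  rcases lt_trichotomy (tfun n f k) (tfun n g k) with hlt | he | hgt
  · exact absurd hlt (fun hl => key f g h hl)
  · exact he
  · exact absurd hgt (fun hl => key g f h.symm hl)

lemma Af_inj (n : ℕ) : Function.Injective (Af n) := by
  intro f g h
  funext k
  have ht := tfun_inj h k
  have h1 := k.isLt
  unfold tfun at ht
  apply Fin.ext
  split at ht <;> split at ht <;> omega

end Stmt8aux

namespace Stmt8aux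

open Finset

variable {n : ℕ} {M : Fin n → Fin n → Bool}

/-- out-neighborhood -/
def rowS (M : Fin n → Fin n → Bool) (u : Fin n) : Finset (Fin n) :=
  univ.filter (fun k => M u k = true)

/-- in-neighborhood -/
def colS (M : Fin n → Fin n → Bool) (u : Fin n) : Finset (Fin n) :=
  univ.filter (fun k => M k u = true)

def P (M : Fin n → Fin n → Bool) (u : Fin n) : ℕ := (rowS M u).card
def Q (M : Fin n → Fin n → Bool) (u : Fin n) : ℕ := (colS M u).card

lemma mem_rowS {u k : Fin n} : k ∈ rowS M u ↔ M u k = true := by simp [rowS]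
lemma mem_colS {u k : Fin n} : k ∈ colS M u ↔ M k u = true := by simp [colS]

lemma ne_of_arc (hd : ∀ i, M i i = false) {a b : Fin n} (h : M a b = true) : a ≠ b := by
  intro hc; subst hc; rw [hd] at h; exact absurd h (by simp)

lemma row_total (hM : IsThresholdB n M) {u v : Fin n} (huv : u ≠ v) :
    (∀ k, k ≠ u → M v k = true → M u k = true) ∨
    (∀ k, k ≠ v → M u k = true → M v k = true) := by
  obtain ⟨hd, h2s, _⟩ := hM
  by_contra hc
  push_neg at hc
  obtain ⟨⟨x, hxu, hvx, hux⟩, ⟨z, hzv, huz, hvz⟩⟩ := hc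
  have hux : M u x = false := by simpa using hux
  have hvz : M v z = false := by simpa using hvz
  have huzne : u ≠ z := ne_of_arc hd huz
  have hvxne : v ≠ x := ne_of_arc hd hvx
  have hzx : z ≠ x := by
    intro hc; subst hc
    rw [huz] at hux; exact absurd hux (by simp)
  exact h2s ⟨u, z, v, x, huzne, huv, hxu.symm, hzv, hzx, hvxne,
    huz, hvx, hux, hvz⟩

lemma col_total (hM : IsThresholdB n M) {u v : Fin n} (huv : u ≠ v) :
    (∀ k, k ≠ v → M k u = true → M k v = true) ∨
    (∀ k, k ≠ u → M k v = true → M k u = true) := by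
  obtain ⟨hd, h2s, _⟩ := hM
  by_contra hc
  push_neg at hc
  obtain ⟨⟨x, hxv, hxu, hxv'⟩, ⟨z, hzu, hzv, hzu'⟩⟩ := hc
  have hxv' : M x v = false := by simpa using hxv'
  have hzu' : M z u = false := by simpa using hzu'
  have hxu_ne : x ≠ u := ne_of_arc hd hxu
  have hzv_ne : z ≠ v := ne_of_arc hd hzv
  have hxz : x ≠ z := by
    intro hc; subst hc
    rw [hxu] at hzu'; exact absurd hzu' (by simp)
  exact h2s ⟨x, u, z, v, hxu_ne, hxz, hxv, hzu.symm, huv, hzv_ne,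
    hxu, hzv, hxv', hzu'⟩

lemma dom_of_deg (hM : IsThresholdB n M) {u v : Fin n} (huv : u ≠ v)
    (hkey : P M v < P M u ∨ (P M u = P M v ∧ Q M v ≤ Q M u)) :
    ∀ k, k ≠ u → M v k = true → M u k = true := by
  classical
  by_contra hc
  push_neg at hc
  obtain ⟨k0, hk0u, hvk0, huk0⟩ := hc
  have huk0 : M u k0 = false := by simpa using huk0
  obtain ⟨hd, h2s, h3c⟩ := hM
  have hk0v : k0 ≠ v := (ne_of_arc hd hvk0).symm
  -- v dominates u (row-wise)
  have hdvu : ∀ k, k ≠ v → M u k = true → M v k = true := by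
    rcases row_total ⟨hd, h2s, h3c⟩ huv with h | h
    · exact absurd (h k0 hk0u hvk0) (by simp [huk0])
    · exact h
  -- rowS M u \ {v} ⊆ rowS M v \ {k0}
  have hsub : (rowS M u).erase v ⊆ (rowS M v).erase k0 := by
    intro k hk
    rw [mem_erase, mem_rowS] at hk
    rw [mem_erase, mem_rowS]
    refine ⟨?_, hdvu k hk.1 hk.2⟩
    intro hc; subst hc
    rw [hk.2] at huk0; exact absurd huk0 (by simp)
  have hk0mem : k0 ∈ rowS M v := mem_rowS.mpr hvk0
  have hPv1 : 1 ≤ P M v := Finset.card_pos.mpr ⟨k0, hk0mem⟩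
  have hcard := Finset.card_le_card hsub
  rw [Finset.card_erase_of_mem hk0mem] at hcard
  cases hBuv : M u v with
  | false =>
    have hnot : v ∉ rowS M u := by simp [mem_rowS, hBuv]
    rw [Finset.erase_eq_of_notMem hnot] at hcard
    -- P M u ≤ P M v - 1, but hkey gives P M v ≤ P M u
    have : P M v ≤ P M u := by rcases hkey with h | ⟨h, _⟩ <;> omega
    unfold P at *
    omega
  | true =>
    have hvmem : v ∈ rowS M u := mem_rowS.mpr hBuv
    rw [Finset.card_erase_of_mem hvmem] at hcard
    have hPu1 : 1 ≤ P M u := Finset.card_pos.mpr ⟨v, hvmem⟩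
    have hPle : P M u ≤ P M v := by unfold P at *; omega
    obtain ⟨hPeq, hQle⟩ : P M u = P M v ∧ Q M v ≤ Q M u := by
      rcases hkey with h | h
      · omega
      · exact h
    -- the two erased sets are equal
    have heq : (rowS M u).erase v = (rowS M v).erase k0 := by
      apply Finset.eq_of_subset_of_card_le hsub
      rw [Finset.card_erase_of_mem hk0mem, Finset.card_erase_of_mem hvmem]
      unfold P at hPeq; omega
    -- M v u = false
    have hBvu : M v u = false := by
      cases hB : M v u with
      | false => rfl
      | true =>
        exfalso
        have : u ∈ (rowS M v).erase k0 :=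
          mem_erase.mpr ⟨hk0u.symm, mem_rowS.mpr hB⟩
        rw [← heq, mem_erase, mem_rowS] at this
        rw [hd] at this; exact absurd this.2 (by simp)
    -- columns
    rcases col_total ⟨hd, h2s, h3c⟩ huv with hA | hB
    · -- colS M u ⊆ colS M v strictly
      have hsubc : colS M u ⊆ colS M v := by
        intro k hk
        rw [mem_colS] at hk
        have hkv : k ≠ v := by
          intro hc; subst hc; rw [hBvu] at hk; exact absurd hk (by simp)
        exact mem_colS.mpr (hA k hkv hk)
      have hss : colS M u ⊂ colS M v := by
        refine Finset.ssubset_iff_of_subset hsubc |>.mpr ⟨u, mem_colS.mpr hBuv, ?_⟩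
        simp [mem_colS, hd u]
      have := Finset.card_lt_card hss
      unfold Q at hQle; omega
    · -- colS M v \ {u} ⊆ colS M u, find w
      have hsubc : (colS M v).erase u ⊆ colS M u := by
        intro k hk
        rw [mem_erase, mem_colS] at hk
        exact mem_colS.mpr (hB k hk.1 hk.2)
      have humem : u ∈ colS M v := mem_colS.mpr hBuv
      have hclt : ((colS M v).erase u).card < (colS M u).card := by
        rw [Finset.card_erase_of_mem humem]
        have h1 : 1 ≤ Q M v := Finset.card_pos.mpr ⟨u, humem⟩
        unfold Q at *; omega
      have hnsub : ¬ (colS M u ⊆ (colS M v).erase u) := by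
        intro hc
        exact absurd (Finset.card_le_card hc) (by omega)
      obtain ⟨w, hwCu, hwn⟩ := Finset.not_subset.mp hnsub
      rw [mem_colS] at hwCu
      have hwu : w ≠ u := ne_of_arc hd hwCu
      have hwv' : M w v = false := by
        cases hB2 : M w v with
        | false => rfl
        | true =>
          exact absurd (mem_erase.mpr ⟨hwu, mem_colS.mpr hB2⟩) hwn
      have hwv : w ≠ v := by
        intro hc; subst hc; rw [hBvu] at hwCu; exact absurd hwCu (by simp)
      by_cases hwk0 : w = k0
      · have h1 : M k0 u = true := hwk0 ▸ hwCu
        have h2 : M k0 v = false := hwk0 ▸ hwv'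
        exact h3c ⟨u, v, k0, huv, hk0u.symm, hk0v.symm,
          hBuv, hvk0, h1, hBvu, h2, huk0⟩
      · cases hQb : M w k0 with
        | false =>
          exact h2s ⟨w, u, v, k0, hwu, hwv, hwk0, huv, hk0u.symm, hk0v.symm,
            hwCu, hvk0, hQb, hBvu⟩
        | true =>
          exact h2s ⟨w, k0, u, v, hwk0, hwu, hwv, hk0u, hk0v, huv,
            hQb, hBuv, hwv', huk0⟩

end Stmt8aux

namespace Stmt8aux

open Finset

variable {n : ℕ} {M : Fin n → Fin n → Bool}

def key (M : Fin n → Fin n → Bool) (v : Fin n) : ℕ :=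
  (n + 1) * (n - P M v) + (n - Q M v)

lemma P_le (M : Fin n → Fin n → Bool) (v : Fin n) : P M v ≤ n := by
  have := Finset.card_filter_le (univ : Finset (Fin n)) (fun k => M v k = true)
  simpa [P, rowS] using this

lemma Q_le (M : Fin n → Fin n → Bool) (v : Fin n) : Q M v ≤ n := by
  have := Finset.card_filter_le (univ : Finset (Fin n)) (fun k => M k v = true)
  simpa [Q, colS] using this

lemma dom_of_key (hM : IsThresholdB n M) {u v : Fin n} (huv : u ≠ v)
    (h : key M u ≤ key M v) :
    ∀ k, k ≠ u → M v k = true → M u k = true := by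
  apply dom_of_deg hM huv
  have hPu := P_le M u; have hPv := P_le M v
  have hQu := Q_le M u; have hQv := Q_le M v
  unfold key at h
  have h1 : n - P M u ≤ n - P M v := by
    by_contra hlt
    push_neg at hlt
    have c2 : (n + 1) * ((n - P M v) + 1) ≤ (n + 1) * (n - P M u) :=
      Nat.mul_le_mul_left _ (by omega)
    have e : (n + 1) * ((n - P M v) + 1) = (n + 1) * (n - P M v) + (n + 1) := by ring
    rw [e] at c2
    set a := (n + 1) * (n - P M u) with ha
    set b := (n + 1) * (n - P M v) with hb
    omega
  have hPge : P M v ≤ P M u := by omega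
  by_cases hP : P M u = P M v
  · refine Or.inr ⟨hP, ?_⟩
    have : n - P M u = n - P M v := by omega
    rw [this] at h
    omega
  · exact Or.inl (by omega)

lemma exists_f (hM : IsThresholdB n M) :
    ∃ (f : Fin n → Fin n) (σ : Equiv.Perm (Fin n)),
      ∀ i j, Af n f i j = M (σ i) (σ j) := by
  classical
  obtain ⟨hd, h2s, h3c⟩ := hM
  set σ := Tuple.sort (key M) with hσ
  have hmono : Monotone (key M ∘ σ) := Tuple.monotone_sort (key M)
  set B : Fin n → Fin n → Bool := fun i j => M (σ i) (σ j) with hB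
  have hBd : ∀ i, B i i = false := fun i => hd (σ i)
  -- columns of B are downward closed
  have hdc : ∀ i j k : Fin n, i < j → i ≠ k → B j k = true → B i k = true := by
    intro i j k hij hik hjk
    have hne : σ i ≠ σ j := fun hc => (ne_of_lt hij) (σ.injective hc)
    have hkey : key M (σ i) ≤ key M (σ j) := hmono (le_of_lt hij)
    exact dom_of_key ⟨hd, h2s, h3c⟩ hne hkey (σ k)
      (fun hc => hik (σ.injective hc).symm) hjk
  -- threshold values
  set S : Fin n → Finset (Fin n) := fun k => univ.filter (fun i => B i k = true) with hS
  set t : Fin n → ℕ := fun k => (S k).sup (fun i => (i : ℕ) + 1) with ht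
  have ht_le : ∀ k, t k ≤ n := by
    intro k
    apply Finset.sup_le
    intro i _
    exact i.isLt
  have hiff : ∀ i k : Fin n, B i k = true ↔ ((i : ℕ) < t k ∧ i ≠ k) := by
    intro i k
    constructor
    · intro h
      have hmem : i ∈ S k := by simp [hS, h]
      have h2 : (i : ℕ) + 1 ≤ t k := Finset.le_sup (f := fun i : Fin n => (i : ℕ) + 1) hmem
      refine ⟨by omega, ?_⟩
      intro hc; subst hc; rw [hBd] at h; exact absurd h (by simp)
    · rintro ⟨hlt, hik⟩
      obtain ⟨m, hm, hmlt⟩ := Finset.lt_sup_iff.mp hlt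
      have hmB : B m k = true := by simpa [hS] using hm
      rcases eq_or_lt_of_le (Nat.lt_succ_iff.mp hmlt) with he | hl
      · rwa [show i = m from Fin.ext he]
      · exact hdc i m k (Fin.lt_def.mpr hl) hik hmB
  have ht_ne : ∀ k : Fin n, t k ≠ (k : ℕ) + 1 := by
    intro k hc
    have : t k ≤ (k : ℕ) := by
      apply Finset.sup_le
      intro i hi
      have hiB : B i k = true := by simpa [hS] using hi
      have h1 := (hiff i k).mp hiB
      have h2 : (i : ℕ) + 1 ≤ t k := Finset.le_sup (f := fun i : Fin n => (i : ℕ) + 1) hi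
      have h3 : (i : ℕ) ≠ (k : ℕ) := fun he => h1.2 (Fin.ext he)
      omega
    omega
  -- build f
  have hn : ∀ k : Fin n, (k : ℕ) < n := fun k => k.isLt
  set f : Fin n → Fin n := fun k =>
    if h : t k ≤ (k : ℕ) then ⟨t k, lt_of_le_of_lt h (hn k)⟩
    else ⟨t k - 1, by have := ht_le k; have := hn k; omega⟩ with hf
  have htf : ∀ k, tfun n f k = t k := by
    intro k
    by_cases h : t k ≤ (k : ℕ)
    · simp only [hf, tfun, dif_pos h]
      simp [h]
    · have h2 : (k : ℕ) + 2 ≤ t k := by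
        have := ht_ne k; omega
      simp only [hf, tfun, dif_neg h]
      have : ¬ (t k - 1 ≤ (k : ℕ)) := by omega
      simp only [this, if_false]
      omega
  refine ⟨f, σ, ?_⟩
  intro i k
  have : (Af n f i k = true) ↔ (B i k = true) := by
    rw [Af_true_iff, htf, hiff]
  simp only [hB] at this
  cases hx : M (σ i) (σ k) with
  | true => exact this.mpr hx
  | false =>
    cases hy : Af n f i k with
    | false => rfl
    | true => rw [hx] at this; exact absurd (this.mp hy) (by simp)

end Stmt8aux

lemma Stmt8aux.iso_equivalence (n : ℕ) : Equivalence (ThresholdIso n) := by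
  constructor
  · intro A; exact ⟨Equiv.refl _, fun i j => rfl⟩
  · rintro A B ⟨σ, h⟩
    exact ⟨σ.symm, fun i j => by
      have := h (σ.symm i) (σ.symm j); simpa using this.symm⟩
  · rintro A B C ⟨σ, h⟩ ⟨τ, h'⟩
    exact ⟨τ.trans σ, fun i j => by
      simpa [Equiv.trans_apply] using (h (τ i) (τ j)).trans (h' i j)⟩


/-- Corollary 3: if `TD n` is the number of isomorphism classes of
threshold digraphs on `n` vertices, then `n^n / n! ≤ TD n ≤ n^n`. -/
theorem stmt8 (n : ℕ) (TD : ℕ)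
    (hTD : TD = Nat.card (Quot (ThresholdIso n))) :
    n ^ n ≤ n.factorial * TD ∧ TD ≤ n ^ n := by
  classical
  subst hTD
  let q : (Fin n → Fin n) → Quot (ThresholdIso n) :=
    fun f => Quot.mk _ ⟨Stmt8aux.Af n f, Stmt8aux.Af_threshold n f⟩
  have hsurj : Function.Surjective q := by
    intro x
    induction x using Quot.ind with
    | _ A =>
      obtain ⟨M, hM⟩ := A
      obtain ⟨f, σ, hf⟩ := Stmt8aux.exists_f hM
      refine ⟨f, Quot.sound ⟨σ.symm, fun i j => ?_⟩⟩
      show Stmt8aux.Af n f (σ.symm i) (σ.symm j) = M i j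
      rw [hf (σ.symm i) (σ.symm j)]; simp
  have hQcard : Nat.card (Fin n → Fin n) = n ^ n := by
    simp [Nat.card_eq_fintype_card]
  have hupper : Nat.card (Quot (ThresholdIso n)) ≤ n ^ n := by
    have h := Nat.card_le_card_of_surjective q hsurj
    rw [hQcard] at h; exact h
  have spec : ∀ f : Fin n → Fin n,
      ThresholdIso n (Quot.out (q f)) ⟨Stmt8aux.Af n f, Stmt8aux.Af_threshold n f⟩ := by
    intro f
    have h1 : Quot.mk (ThresholdIso n) (Quot.out (q f)) =
        Quot.mk (ThresholdIso n) ⟨Stmt8aux.Af n f, Stmt8aux.Af_threshold n f⟩ :=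
      Quot.out_eq (q f)
    exact ((Stmt8aux.iso_equivalence n).eqvGen_iff).mp (Quot.eq.mp h1)
  let Φ : (Fin n → Fin n) → Quot (ThresholdIso n) × Equiv.Perm (Fin n) :=
    fun f => (q f, Classical.choose (spec f))
  have hΦ : Function.Injective Φ := by
    intro f g h
    have hq : q f = q g := congrArg Prod.fst h
    have hσ : Classical.choose (spec f) = Classical.choose (spec g) :=
      congrArg Prod.snd h
    have hfspec := Classical.choose_spec (spec f)
    have hgspec := Classical.choose_spec (spec g)
    apply Stmt8aux.Af_inj n
    funext i j
    have h1 : ((q f).out).1 (Classical.choose (spec f) i) (Classical.choose (spec f) j) =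
        Stmt8aux.Af n f i j := hfspec i j
    have h2 : ((q g).out).1 (Classical.choose (spec g) i) (Classical.choose (spec g) j) =
        Stmt8aux.Af n g i j := hgspec i j
    rw [← h1, hσ, hq]
    exact h2
  have hlower := Nat.card_le_card_of_injective Φ hΦ
  rw [Nat.card_prod, hQcard] at hlower
  have hperm : Nat.card (Equiv.Perm (Fin n)) = n.factorial := by
    simp [Nat.card_eq_fintype_card, Fintype.card_perm]
  rw [hperm] at hlower
  refine ⟨le_trans hlower (le_of_eq (Nat.mul_comm _ _)), hupper⟩
end

section
/- Let A = [a_ij] be an n×n zero-one matrix with zero diagonal, with row sums α_i^+ = Σ_j a_ij and column sums α_j^- = Σ_i a_ij (no ordering assumption needed). Then Σ_{i=1}^n α_i^+ = Σ_{i=1}^n α_i^- and for every k with 1 ≤ k ≤ n, Σ_{i=1}^k min(α_i^-, k−1) + Σ_{i=k+1}^n min(α_i^-, k) ≥ Σ_{i=1}^k α_i^+. -/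
/-- any zero-one matrix with zero diagonal satisfies the Fulkerson–Chen
inequalities (and equal total row and column sums), with no ordering assumption. -/
theorem stmt10 (n : ℕ) (A : Fin n → Fin n → ℕ)
    (h01 : ZeroOne n A) (hdiag : ZeroDiag n A) :
    (∑ i, outdeg n A i) = (∑ i, indeg n A i) ∧
    ∀ k : ℕ, 1 ≤ k → k ≤ n →
      (∑ i : Fin n, if (i : ℕ) < k then outdeg n A i else 0) ≤
        ∑ i : Fin n, if (i : ℕ) < k then min (indeg n A i) (k - 1)
          else min (indeg n A i) k := by
  constructor
  · simp only [outdeg, indeg]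
    exact Finset.sum_comm
  · intro k hk1 hkn
    set S : Finset (Fin n) := Finset.univ.filter (fun i => (i : ℕ) < k) with hS
    have hcardS : S.card = k := by
      rw [hS]
      have : (Finset.univ.filter (fun i : Fin n => (i : ℕ) < k)) =
          (Finset.range k).attachFin (fun m hm => lt_of_lt_of_le (Finset.mem_range.mp hm) hkn) := by
        ext i
        simp [Finset.mem_attachFin]
      rw [this, Finset.card_attachFin, Finset.card_range]
    have hL : (∑ i : Fin n, if (i : ℕ) < k then outdeg n A i else 0)
        = ∑ j, ∑ i ∈ S, A i j := by
      rw [← Finset.sum_filter, ← hS]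
      rw [Finset.sum_comm]
      simp [outdeg]
    rw [hL]
    apply Finset.sum_le_sum
    intro j _
    have hb1 : (∑ i ∈ S, A i j) ≤ indeg n A j := by
      apply Finset.sum_le_sum_of_subset (Finset.subset_univ S)
    have hb2 : (∑ i ∈ S, A i j) ≤ (S.erase j).card := by
      rw [← Finset.sum_erase S (f := fun i => A i j) (hdiag j)]
      calc (∑ i ∈ S.erase j, A i j) ≤ ∑ i ∈ S.erase j, 1 := by
            apply Finset.sum_le_sum
            intro i _
            rcases h01 i j with h | h <;> omega
        _ = (S.erase j).card := by simp
    by_cases hj : (j : ℕ) < k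
    · have hmem : j ∈ S := by simp [hS, hj]
      have : (S.erase j).card = k - 1 := by
        rw [Finset.card_erase_of_mem hmem, hcardS]
      simp only [if_pos hj, le_min_iff]
      exact ⟨hb1, this ▸ hb2⟩
    · have hmem : j ∉ S := by simp [hS, hj]
      have : (S.erase j).card = k := by
        rw [Finset.erase_eq_of_notMem hmem, hcardS]
      simp only [if_neg hj, le_min_iff]
      exact ⟨hb1, this ▸ hb2⟩
end

section
/- Let α = ((α_1^+,α_1^-),…,(α_n^+,α_n^-)) be a sequence of pairs of nonnegative integers in positive lexicographic order with α_i^- ≤ n − 1 for all i. If Σ_{i=1}^n α_i^+ = Σ_{i=1}^n α_i^- and for every k with 1 ≤ k < n, Σ_{i=1}^k min(α_i^-, k−1) + Σ_{i=k+1}^n min(α_i^-, k) ≥ Σ_{i=1}^k α_i^+, then there exists an n×n zero-one matrix A = [a_ij] with zero diagonal whose row sums are α_1^+,…,α_n^+ and whose column sums are α_1^-,…,α_n^-. -/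
namespace Stmt11Aux

open Finset

variable {n : ℕ}

lemma sum_eq_off {f g : Fin n → ℕ} {j : Fin n} (h : ∀ c, c ≠ j → f c = g c) :
    (∑ c, f c) + g j = (∑ c, g c) + f j := by
  have hf := Finset.sum_erase_add Finset.univ f (Finset.mem_univ j)
  have hg := Finset.sum_erase_add Finset.univ g (Finset.mem_univ j)
  have he : ∑ c ∈ Finset.univ.erase j, f c = ∑ c ∈ Finset.univ.erase j, g c :=
    Finset.sum_congr rfl fun c hc => h c (Finset.ne_of_mem_erase hc)
  omega

lemma sum_eq_off2 {f g : Fin n → ℕ} {a b : Fin n} (hab : a ≠ b)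
    (h : ∀ c, c ≠ a → c ≠ b → f c = g c) :
    (∑ c, f c) + g a + g b = (∑ c, g c) + f a + f b := by
  have hf := Finset.sum_erase_add Finset.univ f (Finset.mem_univ a)
  have hg := Finset.sum_erase_add Finset.univ g (Finset.mem_univ a)
  have hb : b ∈ Finset.univ.erase a := Finset.mem_erase.2 ⟨hab.symm, Finset.mem_univ b⟩
  have hf2 := Finset.sum_erase_add (Finset.univ.erase a) f hb
  have hg2 := Finset.sum_erase_add (Finset.univ.erase a) g hb
  have he : ∑ c ∈ (Finset.univ.erase a).erase b, f c
      = ∑ c ∈ (Finset.univ.erase a).erase b, g c := by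
    refine Finset.sum_congr rfl fun c hc => ?_
    exact h c (Finset.ne_of_mem_erase (Finset.mem_of_mem_erase hc)) (Finset.ne_of_mem_erase hc)
  omega

def tot (A : Fin n → Fin n → ℕ) : ℕ := ∑ i, outdeg n A i

lemma tot_eq_sum_indeg (A : Fin n → Fin n → ℕ) : tot A = ∑ j, indeg n A j := by
  unfold tot outdeg indeg
  exact Finset.sum_comm

def Feasible (αp αm : Fin n → ℕ) (A : Fin n → Fin n → ℕ) : Prop :=
  ZeroOne n A ∧ ZeroDiag n A ∧ (∀ i, outdeg n A i ≤ αp i) ∧ (∀ j, indeg n A j ≤ αm j)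

def IsPath (A : Fin n → Fin n → ℕ) : Fin n → List (Fin n × Fin n) → Fin n → Prop
  | i, [], jf => A i jf = 0 ∧ i ≠ jf
  | i, p :: rest, jf => A i p.1 = 0 ∧ i ≠ p.1 ∧ A p.2 p.1 = 1 ∧ IsPath A p.2 rest jf

lemma isPath_mem {A : Fin n → Fin n → ℕ} :
    ∀ (l : List (Fin n × Fin n)) (r jf : Fin n), IsPath A r l jf →
    ∀ j2 i2, (j2, i2) ∈ l →
      ∃ suf, suf.length < l.length ∧ A i2 j2 = 1 ∧ IsPath A i2 suf jf := by
  intro l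
  induction l with
  | nil => intro r jf _ j2 i2 hm; simp at hm
  | cons p t ih =>
    intro r jf hp j2 i2 hm
    obtain ⟨h1, h2, h3, h4⟩ := hp
    rcases List.mem_cons.mp hm with he | ht
    · have hp1 : p.1 = j2 := by rw [← he]
      have hp2 : p.2 = i2 := by rw [← he]
      exact ⟨t, by simp, by rw [← hp1, ← hp2]; exact h3, by rw [← hp2]; exact h4⟩
    · obtain ⟨suf, hl, hA, hP⟩ := ih p.2 jf h4 j2 i2 ht
      exact ⟨suf, lt_trans hl (by simp), hA, hP⟩

lemma isPath_congr {A B : Fin n → Fin n → ℕ} {j : Fin n}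
    (hAB : ∀ r c, c ≠ j → B r c = A r c) :
    ∀ (l : List (Fin n × Fin n)) (r jf : Fin n), jf ≠ j → (∀ p ∈ l, p.1 ≠ j) →
      IsPath A r l jf → IsPath B r l jf := by
  intro l
  induction l with
  | nil =>
    intro r jf hjf _ hp
    exact ⟨by rw [hAB r jf hjf]; exact hp.1, hp.2⟩
  | cons p t ih =>
    intro r jf hjf hcol hp
    obtain ⟨h1, h2, h3, h4⟩ := hp
    have hpj : p.1 ≠ j := hcol p List.mem_cons_self
    exact ⟨by rw [hAB r p.1 hpj]; exact h1, h2, by rw [hAB p.2 p.1 hpj]; exact h3,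
      ih p.2 jf hjf (fun q hq => hcol q (List.mem_cons_of_mem p hq)) h4⟩

lemma aug_base {αp αm : Fin n → ℕ} {A : Fin n → Fin n → ℕ} (hF : Feasible αp αm A)
    {i j : Fin n} (hij : i ≠ j) (h0 : A i j = 0)
    (hdo : outdeg n A i < αp i) (hdi : indeg n A j < αm j) :
    ∃ B, Feasible αp αm B ∧ tot B = tot A + 1 := by
  obtain ⟨hZO, hZD, hop, him⟩ := hF
  obtain ⟨B, hB⟩ : ∃ B : Fin n → Fin n → ℕ,
      B = fun r c => if r = i ∧ c = j then 1 else A r c := ⟨_, rfl⟩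
  have hoff : ∀ r c, ¬(r = i ∧ c = j) → B r c = A r c := by
    intro r c hc; simp [hB, hc]
  have hrow : ∀ r, r ≠ i → outdeg n B r = outdeg n A r := by
    intro r hr
    unfold outdeg
    exact Finset.sum_congr rfl fun c _ => hoff r c (by tauto)
  have hcol : ∀ c, c ≠ j → indeg n B c = indeg n A c := by
    intro c hc
    unfold indeg
    exact Finset.sum_congr rfl fun r _ => hoff r c (by tauto)
  have hBij : B i j = 1 := by simp [hB]
  have hrowe : outdeg n B i = outdeg n A i + 1 := by
    have key : (∑ c, B i c) + A i j = (∑ c, A i c) + B i j :=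
      sum_eq_off (fun c hc => hoff i c (by tauto))
    unfold outdeg
    omega
  have hcole : indeg n B j = indeg n A j + 1 := by
    have key : (∑ r, B r j) + A i j = (∑ r, A r j) + B i j :=
      sum_eq_off (fun r hr => hoff r j (by tauto))
    unfold indeg
    omega
  refine ⟨B, ⟨?_, ?_, ?_, ?_⟩, ?_⟩
  · intro r c; by_cases h : r = i ∧ c = j <;> simp [hB, h, hZO r c]
  · intro r
    have : ¬(r = i ∧ r = j) := by rintro ⟨rfl, rfl⟩; exact hij rfl
    simp [hB, this, hZD r]
  · intro r
    by_cases hr : r = i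
    · subst hr; omega
    · rw [hrow r hr]; exact hop r
  · intro c
    by_cases hc : c = j
    · subst hc; omega
    · rw [hcol c hc]; exact him c
  · unfold tot
    have key : (∑ r, outdeg n B r) + outdeg n A i = (∑ r, outdeg n A r) + outdeg n B i :=
      sum_eq_off (fun r hr => hrow r hr)
    omega

lemma augment {αp αm : Fin n → ℕ} :
    ∀ (m : ℕ) (A : Fin n → Fin n → ℕ), Feasible αp αm A →
    ∀ (i : Fin n) (l : List (Fin n × Fin n)) (jf : Fin n),
      l.length ≤ m → outdeg n A i < αp i → indeg n A jf < αm jf → IsPath A i l jf →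
      ∃ B, Feasible αp αm B ∧ tot B = tot A + 1 := by
  intro m
  induction m with
  | zero =>
    intro A hF i l jf hl hdo hdi hp
    match l with
    | [] => exact aug_base hF hp.2 hp.1 hdo hdi
    | p :: t => simp at hl
  | succ m ih =>
    intro A hF i l jf hl hdo hdi hp
    match l with
    | [] => exact aug_base hF hp.2 hp.1 hdo hdi
    | (j, i') :: t =>
      obtain ⟨h0', hij', h1', hpt'⟩ := hp
      have h0 : A i j = 0 := h0'
      have hij : i ≠ j := hij'
      have h1 : A i' j = 1 := h1'
      have hpt : IsPath A i' t jf := hpt'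
      clear h0' hij' h1' hpt'
      by_cases hjf : jf = j
      · subst hjf; exact aug_base hF hij h0 hdo hdi
      by_cases hex : ∃ i2, (j, i2) ∈ t
      · obtain ⟨i2, hm⟩ := hex
        obtain ⟨suf, hls, hA2, hPs⟩ := isPath_mem t i' jf hpt j i2 hm
        have hp' : IsPath A i ((j, i2) :: suf) jf := ⟨h0, hij, hA2, hPs⟩
        exact ih A hF i ((j, i2) :: suf) jf (by simp at hl ⊢; omega) hdo hdi hp'
      · obtain ⟨hZO, hZD, hop, him⟩ := hF
        have hii' : i' ≠ i := by rintro rfl; rw [h0] at h1; exact absurd h1 (by omega)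
        have hi'j : i' ≠ j := by rintro rfl; rw [hZD i'] at h1; exact absurd h1 (by omega)
        obtain ⟨B, hB⟩ : ∃ B : Fin n → Fin n → ℕ, B = fun r c =>
            if r = i ∧ c = j then 1 else if r = i' ∧ c = j then 0 else A r c := ⟨_, rfl⟩
        have hoff : ∀ r c, c ≠ j → B r c = A r c := by
          intro r c hc; simp [hB, hc]
        have hBi : ∀ c, B i c = if c = j then 1 else A i c := by
          intro c
          by_cases hc : c = j <;> simp [hB, hc, hii'.symm]
        have hBi' : ∀ c, B i' c = if c = j then 0 else A i' c := by
          intro c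
          by_cases hc : c = j <;> simp [hB, hc, hii']
        have hrow : ∀ r, r ≠ i → r ≠ i' → outdeg n B r = outdeg n A r := by
          intro r hr hr'
          unfold outdeg
          refine Finset.sum_congr rfl fun c _ => ?_
          simp [hB, hr, hr']
        have hrowi : outdeg n B i = outdeg n A i + 1 := by
          have key : (∑ c, B i c) + A i j = (∑ c, A i c) + B i j :=
            sum_eq_off (fun c hc => hoff i c hc)
          have hb : B i j = 1 := by rw [hBi]; simp
          unfold outdeg
          omega
        have hrowi' : outdeg n B i' + 1 = outdeg n A i' := by
          have key : (∑ c, B i' c) + A i' j = (∑ c, A i' c) + B i' j :=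
            sum_eq_off (fun c hc => hoff i' c hc)
          have hb : B i' j = 0 := by rw [hBi']; simp
          unfold outdeg
          omega
        have hcolj : indeg n B j = indeg n A j := by
          have key : (∑ r, B r j) + A i j + A i' j = (∑ r, A r j) + B i j + B i' j :=
            sum_eq_off2 (f := fun r => B r j) (g := fun r => A r j) (Ne.symm hii')
              (fun r hr hr' => by simp [hB, hr, hr'])
          have hb1 : B i j = 1 := by rw [hBi]; simp
          have hb2 : B i' j = 0 := by rw [hBi']; simp
          unfold indeg
          omega
        have hcol : ∀ c, indeg n B c = indeg n A c := by
          intro c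
          by_cases hc : c = j
          · subst hc; exact hcolj
          · unfold indeg
            exact Finset.sum_congr rfl fun r _ => hoff r c hc
        have hFB : Feasible αp αm B := by
          refine ⟨?_, ?_, ?_, ?_⟩
          · intro r c
            by_cases h' : r = i ∧ c = j
            · simp [hB, h']
            · by_cases h'' : r = i' ∧ c = j <;> simp [hB, h', h'', hZO r c] <;> tauto
          · intro r
            have n1 : ¬(r = i ∧ r = j) := by rintro ⟨rfl, rfl⟩; exact hij rfl
            have n2 : ¬(r = i' ∧ r = j) := by rintro ⟨rfl, rfl⟩; exact hi'j rfl
            simp [hB, n1, n2, hZD r]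
          · intro r
            by_cases hr : r = i
            · subst hr; omega
            by_cases hr' : r = i'
            · rw [hr']; have h2 := hop i'; omega
            · rw [hrow r hr hr']; exact hop r
          · intro c; rw [hcol c]; exact him c
        have htB : tot B = tot A := by
          have key : (∑ r, outdeg n B r) + outdeg n A i + outdeg n A i'
              = (∑ r, outdeg n A r) + outdeg n B i + outdeg n B i' :=
            sum_eq_off2 (f := fun r => outdeg n B r) (g := fun r => outdeg n A r)
              (Ne.symm hii') (fun r hr hr' => hrow r hr hr')
          unfold tot
          omega
        have hdefB : outdeg n B i' < αp i' := by
          have := hop i'; omega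
        have hdiB : indeg n B jf < αm jf := by rw [hcol jf]; exact hdi
        have hpB : IsPath B i' t jf := by
          refine isPath_congr hoff t i' jf hjf (fun p hp => ?_) hpt
          intro hpj
          exact hex ⟨p.2, by rw [← hpj]; exact hp⟩
        obtain ⟨C, hFC, htC⟩ := ih B hFB i' t jf (by simp at hl; omega) hdefB hdiB hpB
        exact ⟨C, hFC, by rw [htC, htB]⟩

def Step (A : Fin n → Fin n → ℕ) (a b : Fin n) : Prop := ∃ j, A a j = 0 ∧ a ≠ j ∧ A b j = 1

lemma path_of_reach {A : Fin n → Fin n → ℕ} {i0 i : Fin n}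
    (h : Relation.ReflTransGen (Step A) i0 i) :
    ∀ j, A i j = 0 → i ≠ j → ∃ l, IsPath A i0 l j := by
  induction h using Relation.ReflTransGen.head_induction_on with
  | refl => intro j h0 hij; exact ⟨[], h0, hij⟩
  | @head a c hstep hrest ih =>
    intro j h0 hij
    obtain ⟨j', h0', hne', h1'⟩ := hstep
    obtain ⟨l, hl⟩ := ih j h0 hij
    exact ⟨(j', c) :: l, h0', hne', h1', hl⟩

lemma exists_aug {αp αm : Fin n → ℕ} {A : Fin n → Fin n → ℕ} (hF : Feasible αp αm A)
    (hfcs : ∀ K : Finset (Fin n), (∑ i ∈ K, αp i) ≤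
      ∑ j, (if j ∈ K then min (αm j) (K.card - 1) else min (αm j) K.card))
    (hlt : tot A < ∑ i, αp i) :
    ∃ i l jf, outdeg n A i < αp i ∧ indeg n A jf < αm jf ∧ IsPath A i l jf := by
  classical
  by_contra haug
  push_neg at haug
  obtain ⟨hZO, hZD, hop, him⟩ := hF
  have hex_def : ∃ i0, outdeg n A i0 < αp i0 := by
    by_contra h
    push_neg at h
    have : (∑ i, αp i) ≤ tot A := Finset.sum_le_sum (fun i _ => h i)
    omega
  obtain ⟨i0, hi0⟩ := hex_def
  obtain ⟨S, hS⟩ : ∃ S : Finset (Fin n),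
      S = univ.filter (fun i => Relation.ReflTransGen (Step A) i0 i) := ⟨_, rfl⟩
  have hi0S : i0 ∈ S := by rw [hS]; simpa using Relation.ReflTransGen.refl
  have hT : ∀ i ∈ S, ∀ j, A i j = 0 → i ≠ j → indeg n A j = αm j := by
    intro i hiS j h0 hij
    have hreach : Relation.ReflTransGen (Step A) i0 i := by
      simp [hS] at hiS; exact hiS
    obtain ⟨l, hl⟩ := path_of_reach hreach j h0 hij
    by_contra hne
    exact haug i0 l j hi0 (lt_of_le_of_ne (him j) hne) hl
  have hclosed : ∀ i ∈ S, ∀ j, A i j = 0 → i ≠ j → ∀ i2, A i2 j = 1 → i2 ∈ S := by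
    intro i hiS j h0 hij i2 h2
    have hreach : Relation.ReflTransGen (Step A) i0 i := by
      simp [hS] at hiS; exact hiS
    have : Relation.ReflTransGen (Step A) i0 i2 :=
      Relation.ReflTransGen.tail hreach ⟨j, h0, hij, h2⟩
    simp [hS]; exact this
  obtain ⟨k, hk⟩ : ∃ k, k = S.card := ⟨_, rfl⟩
  have hcol : ∀ j, (if j ∈ S then min (αm j) (k - 1) else min (αm j) k) ≤ ∑ i ∈ S, A i j := by
    intro j
    by_cases hcase : ∃ i ∈ S, A i j = 0 ∧ i ≠ j
    · obtain ⟨i, hiS, h0, hij⟩ := hcase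
      have h1 : indeg n A j = αm j := hT i hiS j h0 hij
      have h3 : ∀ i2 ∈ Sᶜ, A i2 j = 0 := by
        intro i2 hi2
        rcases hZO i2 j with h | h
        · exact h
        · exact absurd (hclosed i hiS j h0 hij i2 h) (by simpa using hi2)
      have h4 : (∑ i ∈ S, A i j) + ∑ i ∈ Sᶜ, A i j = indeg n A j := by
        unfold indeg
        exact Finset.sum_add_sum_compl S _
      have h5 : ∑ i ∈ Sᶜ, A i j = 0 := Finset.sum_eq_zero h3
      have : (∑ i ∈ S, A i j) = αm j := by omega
      rw [this]
      split <;> exact min_le_left _ _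
    · push_neg at hcase
      have hone : ∀ i ∈ S.erase j, A i j = 1 := by
        intro i hi
        have hiS := Finset.mem_of_mem_erase hi
        have hij := Finset.ne_of_mem_erase hi
        rcases hZO i j with h | h
        · exact absurd (hcase i hiS h) hij
        · exact h
      have h6 : ∑ i ∈ S.erase j, A i j = (S.erase j).card := by
        rw [Finset.sum_congr rfl hone]
        simp
      have h7 : ∑ i ∈ S.erase j, A i j ≤ ∑ i ∈ S, A i j :=
        Finset.sum_le_sum_of_subset (Finset.erase_subset _ _)
      by_cases hjS : j ∈ S
      · have : (S.erase j).card = k - 1 := by rw [Finset.card_erase_of_mem hjS]; omega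
        simp only [hjS, if_true]
        calc min (αm j) (k - 1) ≤ k - 1 := min_le_right _ _
          _ = ∑ i ∈ S.erase j, A i j := by omega
          _ ≤ _ := h7
      · have : S.erase j = S := Finset.erase_eq_of_notMem hjS
        simp only [hjS, if_false]
        calc min (αm j) k ≤ k := min_le_right _ _
          _ = ∑ i ∈ S.erase j, A i j := by rw [this] at h6 ⊢; omega
          _ ≤ _ := h7
  have hsum1 : ∑ i ∈ S, outdeg n A i < ∑ i ∈ S, αp i :=
    Finset.sum_lt_sum (fun i _ => hop i) ⟨i0, hi0S, hi0⟩
  have hsum2 : ∑ i ∈ S, outdeg n A i = ∑ j : Fin n, ∑ i ∈ S, A i j := by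
    unfold outdeg
    exact Finset.sum_comm
  have hsum3 : (∑ j : Fin n, (if j ∈ S then min (αm j) (k - 1) else min (αm j) k))
      ≤ ∑ j : Fin n, ∑ i ∈ S, A i j :=
    Finset.sum_le_sum fun j _ => hcol j
  have hKS := hfcs S
  rw [← hk] at hKS
  omega

lemma reach_full {αp αm : Fin n → ℕ}
    (hfcs : ∀ K : Finset (Fin n), (∑ i ∈ K, αp i) ≤
      ∑ j, (if j ∈ K then min (αm j) (K.card - 1) else min (αm j) K.card)) :
    ∀ (d : ℕ) (A : Fin n → Fin n → ℕ), Feasible αp αm A → (∑ i, αp i) ≤ tot A + d →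
      ∃ B, Feasible αp αm B ∧ tot B = ∑ i, αp i := by
  intro d
  induction d with
  | zero =>
    intro A hF hle
    have : tot A ≤ ∑ i, αp i := Finset.sum_le_sum (fun i _ => hF.2.2.1 i)
    exact ⟨A, hF, by omega⟩
  | succ d ih =>
    intro A hF hle
    by_cases hlt : tot A < ∑ i, αp i
    · obtain ⟨i, l, jf, hi, hj, hp⟩ := exists_aug hF hfcs hlt
      obtain ⟨B, hFB, htB⟩ := augment l.length A hF i l jf le_rfl hi hj hp
      exact ih B hFB (by omega)
    · have : tot A ≤ ∑ i, αp i := Finset.sum_le_sum (fun i _ => hF.2.2.1 i)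
      exact ⟨A, hF, by omega⟩

lemma mono_pair {αp αm : Fin n → ℕ} (hlex : PosLex n αp αm) :
    ∀ (d : ℕ) (i j : Fin n), (i : ℕ) + d = (j : ℕ) →
      αp j ≤ αp i ∧ (αp i = αp j → αm j ≤ αm i) := by
  intro d
  induction d with
  | zero =>
    intro i j h
    have : i = j := Fin.ext (by omega)
    subst this
    exact ⟨le_rfl, fun _ => le_rfl⟩
  | succ d ih =>
    intro i j h
    have hi1 : (i : ℕ) + 1 < n := by have := j.isLt; omega
    obtain ⟨i', hi'⟩ : ∃ i' : Fin n, i' = ⟨(i : ℕ) + 1, hi1⟩ := ⟨_, rfl⟩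
    have h1 := hlex i i' (by rw [hi'])
    have h2 := ih i' j (by simp [hi']; omega)
    constructor
    · exact le_trans h2.1 h1.1
    · intro he
      have e1 : αp i = αp i' := le_antisymm (he ▸ h2.1) h1.1
      have e2 : αp i' = αp j := by omega
      exact le_trans (h2.2 e2) (h1.2 e1)

lemma card_prefix (k : ℕ) (hk : k ≤ n) :
    (univ.filter (fun i : Fin n => (i : ℕ) < k)).card = k := by
  apply Finset.card_eq_of_bijective (fun i h => (⟨i, lt_of_lt_of_le h hk⟩ : Fin n))
  · intro a ha
    simp only [Finset.mem_filter] at ha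
    exact ⟨a, ha.2, by simp⟩
  · intro i h
    simp [Finset.mem_filter]
    exact h
  · intro i j hi hj hij
    simpa using congrArg Fin.val hij

lemma fcstar {αp αm : Fin n → ℕ} (hlex : PosLex n αp αm) (hub : ∀ i, αm i ≤ n - 1)
    (hsum : (∑ i, αp i) = ∑ i, αm i)
    (hfc : ∀ k : ℕ, 1 ≤ k → k < n →
      (∑ i : Fin n, if (i : ℕ) < k then αp i else 0) ≤
        ∑ i : Fin n, if (i : ℕ) < k then min (αm i) (k - 1) else min (αm i) k) :
    ∀ K : Finset (Fin n), (∑ i ∈ K, αp i) ≤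
      ∑ j, (if j ∈ K then min (αm j) (K.card - 1) else min (αm j) K.card) := by
  classical
  have main : ∀ (s : ℕ) (K : Finset (Fin n)), 1 ≤ K.card → K.card < n →
      (∑ i ∈ K, (i : ℕ)) ≤ s →
      (∑ i ∈ K, αp i) ≤
        ∑ j, (if j ∈ K then min (αm j) (K.card - 1) else min (αm j) K.card) := by
    intro s
    induction s with
    | zero =>
      intro K h1 h2 hs
      by_cases hpre : ∀ i ∈ K, (i : ℕ) < K.card
      · -- prefix case
        have hsub : K ⊆ univ.filter (fun i : Fin n => (i : ℕ) < K.card) :=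
          fun i hi => Finset.mem_filter.2 ⟨Finset.mem_univ i, hpre i hi⟩
        have hKeq : K = univ.filter (fun i : Fin n => (i : ℕ) < K.card) :=
          Finset.eq_of_subset_of_card_le hsub
            (by rw [card_prefix K.card (le_of_lt h2)])
        have hL : (∑ i ∈ K, αp i) = ∑ i : Fin n, if (i : ℕ) < K.card then αp i else 0 := by
          conv_lhs => rw [hKeq]
          rw [Finset.sum_filter]
        have hR : (∑ j : Fin n, (if j ∈ K then min (αm j) (K.card - 1) else min (αm j) K.card))
            = ∑ i : Fin n, if (i : ℕ) < K.card then min (αm i) (K.card - 1)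
                else min (αm i) K.card := by
          refine Finset.sum_congr rfl fun j _ => ?_
          by_cases hj : (j : ℕ) < K.card
          · have : j ∈ K := by rw [hKeq]; simp [hj]
            simp [this, hj]
          · have : j ∉ K := by rw [hKeq]; simp [hj]
            simp [this, hj]
        rw [hL, hR]
        exact hfc K.card h1 h2
      · exfalso
        push_neg at hpre
        obtain ⟨j, hjK, hjk⟩ := hpre
        have : (j : ℕ) ≤ ∑ i ∈ K, (i : ℕ) :=
          Finset.single_le_sum (f := fun i : Fin n => (i : ℕ)) (fun _ _ => Nat.zero_le _) hjK
        omega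
    | succ s ih =>
      intro K h1 h2 hs
      by_cases hpre : ∀ i ∈ K, (i : ℕ) < K.card
      · -- prefix case, same as above
        have hsub : K ⊆ univ.filter (fun i : Fin n => (i : ℕ) < K.card) :=
          fun i hi => Finset.mem_filter.2 ⟨Finset.mem_univ i, hpre i hi⟩
        have hKeq : K = univ.filter (fun i : Fin n => (i : ℕ) < K.card) :=
          Finset.eq_of_subset_of_card_le hsub
            (by rw [card_prefix K.card (le_of_lt h2)])
        have hL : (∑ i ∈ K, αp i) = ∑ i : Fin n, if (i : ℕ) < K.card then αp i else 0 := by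
          conv_lhs => rw [hKeq]
          rw [Finset.sum_filter]
        have hR : (∑ j : Fin n, (if j ∈ K then min (αm j) (K.card - 1) else min (αm j) K.card))
            = ∑ i : Fin n, if (i : ℕ) < K.card then min (αm i) (K.card - 1)
                else min (αm i) K.card := by
          refine Finset.sum_congr rfl fun j _ => ?_
          by_cases hj : (j : ℕ) < K.card
          · have : j ∈ K := by rw [hKeq]; simp [hj]
            simp [this, hj]
          · have : j ∉ K := by rw [hKeq]; simp [hj]
            simp [this, hj]
        rw [hL, hR]
        exact hfc K.card h1 h2
      · push_neg at hpre
        obtain ⟨j, hjK, hjk⟩ := hpre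
        -- find j' ∉ K with index < K.card
        have hex' : ∃ j' : Fin n, (j' : ℕ) < K.card ∧ j' ∉ K := by
          by_contra h
          push_neg at h
          have hsub : univ.filter (fun i : Fin n => (i : ℕ) < K.card) ⊆ K := by
            intro i hi
            simp only [Finset.mem_filter] at hi
            exact h i hi.2
          have hss : univ.filter (fun i : Fin n => (i : ℕ) < K.card) ⊂ K := by
            refine ⟨hsub, fun hsub2 => ?_⟩
            have := hsub2 hjK
            simp only [Finset.mem_filter] at this
            omega
          have := Finset.card_lt_card hss
          rw [card_prefix K.card (le_of_lt h2)] at this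
          omega
        obtain ⟨j', hj'k, hj'K⟩ := hex'
        have hjj' : j' ≠ j := by
          intro h; rw [h] at hj'K; exact hj'K hjK
        obtain ⟨k, hkdef⟩ : ∃ k, k = K.card := ⟨_, rfl⟩
        obtain ⟨K', hK'⟩ : ∃ K' : Finset (Fin n), K' = insert j' (K.erase j) := ⟨_, rfl⟩
        have hj'e : j' ∉ K.erase j := fun h => hj'K (Finset.mem_of_mem_erase h)
        have hcard' : K'.card = k := by
          rw [hK', Finset.card_insert_of_notMem hj'e, Finset.card_erase_of_mem hjK]
          omega
        have hjK' : j ∉ K' := by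
          simp [hK', hjj'.symm]
        have hj'K' : j' ∈ K' := by rw [hK']; exact Finset.mem_insert_self _ _
        have hmem : ∀ t : Fin n, t ≠ j → t ≠ j' → (t ∈ K' ↔ t ∈ K) := by
          intro t ht1 ht2
          simp [hK', ht1, ht2]
        -- index sums
        have hidx1 : (∑ i ∈ K', (i : ℕ)) + (j : ℕ) = (∑ i ∈ K, (i : ℕ)) + (j' : ℕ) := by
          have e1 : (∑ i ∈ K', (i : ℕ)) = (j' : ℕ) + ∑ i ∈ K.erase j, (i : ℕ) := by
            rw [hK', Finset.sum_insert hj'e]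
          have e2 : (∑ i ∈ K.erase j, (i : ℕ)) + (j : ℕ) = ∑ i ∈ K, (i : ℕ) :=
            Finset.sum_erase_add _ _ hjK
          omega
        have hidxlt : (∑ i ∈ K', (i : ℕ)) ≤ s := by omega
        -- αp sums
        have hLrel : (∑ i ∈ K, αp i) + αp j' = (∑ i ∈ K', αp i) + αp j := by
          have e1 : (∑ i ∈ K', αp i) = αp j' + ∑ i ∈ K.erase j, αp i := by
            rw [hK', Finset.sum_insert hj'e]
          have e2 : (∑ i ∈ K.erase j, αp i) + αp j = ∑ i ∈ K, αp i :=
            Finset.sum_erase_add _ _ hjK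
          omega
        -- RHS sums
        have hRrel : (∑ t : Fin n, (if t ∈ K then min (αm t) (k - 1) else min (αm t) k))
              + (if j ∈ K' then min (αm j) (k - 1) else min (αm j) k)
              + (if j' ∈ K' then min (αm j') (k - 1) else min (αm j') k)
            = (∑ t : Fin n, (if t ∈ K' then min (αm t) (k - 1) else min (αm t) k))
              + (if j ∈ K then min (αm j) (k - 1) else min (αm j) k)
              + (if j' ∈ K then min (αm j') (k - 1) else min (αm j') k) := by
          apply sum_eq_off2 (a := j) (b := j') hjj'.symm
          intro t ht1 ht2
          have := hmem t ht1 ht2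
          by_cases h : t ∈ K
          · simp [h, this.2 h]
          · have : t ∉ K' := fun hc => h (this.1 hc)
            simp [h, this]
        simp only [hjK, hj'K, hjK', hj'K', if_true, if_false] at hRrel
        -- key inequality from lex order
        have hple : αp j ≤ αp j' := (mono_pair hlex ((j : ℕ) - (j' : ℕ)) j' j (by omega)).1
        have hkey : αp j + min (αm j) k + min (αm j') (k - 1)
            ≤ αp j' + min (αm j) (k - 1) + min (αm j') k := by
          rcases lt_or_eq_of_le hple with hlt | heq
          · omega
          · have hmle : αm j ≤ αm j' :=
              (mono_pair hlex ((j : ℕ) - (j' : ℕ)) j' j (by omega)).2 heq.symm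
            omega
        have hIH := ih K' (by omega) (by omega) hidxlt
        rw [hcard'] at hIH
        rw [← hkdef]
        omega
  intro K
  rcases Nat.lt_or_ge K.card n with hkn | hkn
  · rcases Nat.eq_zero_or_pos K.card with h0 | h1
    · have : K = ∅ := Finset.card_eq_zero.1 h0
      subst this
      simp
    · exact main (∑ i ∈ K, (i : ℕ)) K h1 hkn le_rfl
  · have hcard : K.card = n := le_antisymm (by simpa using Finset.card_le_univ K) hkn
    have hKu : K = univ := Finset.eq_univ_of_card K (by simp [hcard])
    subst hKu
    rw [hsum]
    rw [hcard]
    refine le_of_eq (Finset.sum_congr rfl fun j _ => ?_)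
    simp [min_eq_left (hub j)]

end Stmt11Aux

/-- a sequence in positive lexicographic order with in-degrees at most
`n - 1`, equal degree sums, and the Fulkerson–Chen inequalities for `1 ≤ k < n`,
is realized by some zero-one matrix with zero diagonal. -/
theorem stmt11 (n : ℕ) (αp αm : Fin n → ℕ)
    (hlex : PosLex n αp αm) (hub : ∀ i, αm i ≤ n - 1)
    (hsum : (∑ i, αp i) = ∑ i, αm i)
    (hfc : ∀ k : ℕ, 1 ≤ k → k < n →
      (∑ i : Fin n, if (i : ℕ) < k then αp i else 0) ≤
        ∑ i : Fin n, if (i : ℕ) < k then min (αm i) (k - 1) else min (αm i) k) :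
    ∃ A : Fin n → Fin n → ℕ, ZeroOne n A ∧ ZeroDiag n A ∧
      (∀ i, outdeg n A i = αp i) ∧ (∀ j, indeg n A j = αm j) := by
  classical
  have hfcs := Stmt11Aux.fcstar hlex hub hsum hfc
  have hF0 : Stmt11Aux.Feasible αp αm (fun _ _ => 0) := by
    refine ⟨fun i j => Or.inl rfl, fun i => rfl, fun i => ?_, fun j => ?_⟩
    · simp [outdeg]
    · simp [indeg]
  obtain ⟨A, hFA, htA⟩ := Stmt11Aux.reach_full hfcs (∑ i, αp i) (fun _ _ => 0) hF0
    (by simp [Stmt11Aux.tot, outdeg])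
  obtain ⟨hZO, hZD, hop, him⟩ := hFA
  refine ⟨A, hZO, hZD, ?_, ?_⟩
  · have h1 : (∑ i, outdeg n A i) = ∑ i, αp i := htA
    intro i
    exact (Finset.sum_eq_sum_iff_of_le (fun i _ => hop i)).1 h1 i (Finset.mem_univ i)
  · have h2 : (∑ j, indeg n A j) = ∑ j, αm j := by
      rw [← Stmt11Aux.tot_eq_sum_indeg, htA, hsum]
    intro j
    exact (Finset.sum_eq_sum_iff_of_le (fun j _ => him j)).1 h2 j (Finset.mem_univ j)
end

section
/- Let G be a threshold digraph on n vertices. If G has at least one arc, then there exists an arc e of G such that the digraph G − e obtained by deleting e is again a threshold digraph. -/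
lemma aux_indeg_le (n : ℕ) (A : Fin n → Fin n → ℕ) (h01 : ZeroOne n A) (b : Fin n) :
    indeg n A b ≤ n := by
  have h : indeg n A b ≤ ∑ _i : Fin n, 1 := by
    apply Finset.sum_le_sum
    intro i _
    rcases h01 i b with h | h <;> omega
  simpa using h

lemma aux_lex (a b c d M : ℕ) (h : a * M + b ≤ c * M + d) (hb : b < M) (hd : d < M) :
    a ≤ c ∧ (a = c → b ≤ d) := by
  constructor
  · by_contra hac
    push_neg at hac
    have h1 : (c + 1) * M ≤ a * M := Nat.mul_le_mul_right M hac
    have h2 : c * M + d < (c + 1) * M := by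
      have he : (c + 1) * M = c * M + M := by ring
      omega
    have h3 : (c + 1) * M ≤ a * M + b := le_trans h1 (Nat.le_add_right _ b)
    omega
  · intro he
    subst he
    exact Nat.le_of_add_le_add_left h

/-- Row domination: if row `u` beats row `y` at some column `x`, then (by absence of
2-switches) row `u` dominates row `y` pointwise off `{u,y}`, giving a degree inequality. -/
lemma rowdom (n : ℕ) (M : Fin n → Fin n → ℕ) (h01 : ZeroOne n M) (hdiag : ZeroDiag n M)
    (hsw : ¬ HasTwoSwitch n M) (u y x : Fin n)
    (huy : u ≠ y) (hxy : x ≠ y) (h1 : M u x = 1) (h0 : M y x = 0) :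
    outdeg n M y + 1 + M u y ≤ outdeg n M u + M y u := by
  have hux : u ≠ x := by
    intro h
    rw [← h] at h1
    rw [hdiag u] at h1
    omega
  set s : Finset (Fin n) := (Finset.univ.erase u).erase y with hs
  have hys : y ∈ Finset.univ.erase u := Finset.mem_erase.mpr ⟨huy.symm, Finset.mem_univ y⟩
  have hxs : x ∈ s := by
    rw [hs]
    exact Finset.mem_erase.mpr ⟨hxy, Finset.mem_erase.mpr ⟨Ne.symm hux, Finset.mem_univ x⟩⟩
  have hpt : ∀ k ∈ s, M y k ≤ M u k := by
    intro k hk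
    rw [hs, Finset.mem_erase, Finset.mem_erase] at hk
    obtain ⟨hky, hku, -⟩ := hk
    rcases h01 y k with h | h
    · omega
    · rcases h01 u k with h' | h'
      · exfalso
        apply hsw
        refine ⟨u, x, y, k, hux, huy, Ne.symm hku, hxy, ?_, Ne.symm hky, h1, h, h', h0⟩
        intro hxk
        rw [← hxk] at h'
        omega
      · omega
  have hsum : ∑ k ∈ s, M y k < ∑ k ∈ s, M u k :=
    Finset.sum_lt_sum hpt ⟨x, hxs, by omega⟩
  have hdy : outdeg n M y = M y u + ∑ k ∈ s, M y k := by
    have e1 : ∑ k ∈ Finset.univ.erase u, M y k = M y y + ∑ k ∈ s, M y k := by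
      rw [hs]
      exact (Finset.add_sum_erase _ _ hys).symm
    have e2 : (∑ k, M y k) = M y u + ∑ k ∈ Finset.univ.erase u, M y k :=
      (Finset.add_sum_erase _ _ (Finset.mem_univ u)).symm
    rw [outdeg, e2, e1, hdiag y]
    omega
  have hdu : outdeg n M u = M u y + ∑ k ∈ s, M u k := by
    have e1 : ∑ k ∈ Finset.univ.erase u, M u k = M u y + ∑ k ∈ s, M u k := by
      rw [hs]
      exact (Finset.add_sum_erase _ _ hys).symm
    have e2 : (∑ k, M u k) = M u u + ∑ k ∈ Finset.univ.erase u, M u k :=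
      (Finset.add_sum_erase _ _ (Finset.mem_univ u)).symm
    rw [outdeg, e2, e1, hdiag u]
    omega
  omega

lemma hsw_tr (n : ℕ) (A : Fin n → Fin n → ℕ) (hsw : ¬ HasTwoSwitch n A) :
    ¬ HasTwoSwitch n (fun i j => A j i) := by
  rintro ⟨w, x, y, z, d1, d2, d3, d4, d5, d6, e1, e2, e3, e4⟩
  exact hsw ⟨x, w, z, y, Ne.symm d1, d5, d4, d3, d2, Ne.symm d6, e1, e2, e4, e3⟩

/-- The 2-switch branch contradiction. -/
lemma sw_contra (n : ℕ) (A : Fin n → Fin n → ℕ)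
    (h01 : ZeroOne n A) (hdiag : ZeroDiag n A) (hsw : ¬ HasTwoSwitch n A)
    (u v x y : Fin n)
    (huv : u ≠ v) (hxu : x ≠ u) (hxv : x ≠ v) (hyu : y ≠ u) (hyv : y ≠ v) (hxy : x ≠ y)
    (hAuv : A u v = 1) (h1 : A u x = 1) (h2 : A y v = 1) (h3 : A y x = 0)
    (hkey : ∀ y' x' : Fin n, y' ≠ x' → A y' x' = 1 →
      outdeg n A u ≤ outdeg n A y' ∧ (outdeg n A u = outdeg n A y' →
        indeg n A v ≤ indeg n A x' ∧ (indeg n A v = indeg n A x' → A v u ≤ A x' y'))) :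
    False := by
  have s1 := rowdom n A h01 hdiag hsw u y x (Ne.symm hyu) hxy h1 h3
  have k1 := (hkey y v hyv h2).1
  have b1 := h01 y u
  have b2 := h01 u y
  have hod : outdeg n A u = outdeg n A y := by omega
  have hyu1 : A y u = 1 := by omega
  have huy0 : A u y = 0 := by omega
  -- column side, via the transpose
  have s3 : indeg n A x + 1 + A x v ≤ indeg n A v + A v x :=
    rowdom n (fun i j => A j i) (fun i j => h01 j i) hdiag (hsw_tr n A hsw)
      v x y (Ne.symm hxv) (Ne.symm hxy) h2 h3
  have k2 := (hkey u x (Ne.symm hxu) h1).2 rfl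
  have b3 := h01 v x
  have b4 := h01 x v
  have hid : indeg n A v = indeg n A x := by omega
  have hvx1 : A v x = 1 := by omega
  have hxv0 : A x v = 0 := by omega
  have hvu1 : A v u = 1 := by
    rcases h01 v u with h | h
    · exact absurd ⟨y, u, v, x, hyu, hyv, Ne.symm hxy, huv, Ne.symm hxu, Ne.symm hxv,
        hyu1, hvx1, h3, h⟩ hsw
    · exact h
  have hxu1 : A x u = 1 := by
    have := k2.2 hid
    have := h01 x u
    omega
  have s7 := rowdom n A h01 hdiag hsw u x v (Ne.symm hxu) (Ne.symm hxv) hAuv hxv0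
  have k4 := (hkey x u hxu hxu1).1
  omega

/-- The induced `C3` branch contradiction. -/
lemma c3_contra (n : ℕ) (A : Fin n → Fin n → ℕ)
    (h01 : ZeroOne n A) (hdiag : ZeroDiag n A) (hsw : ¬ HasTwoSwitch n A)
    (u v t : Fin n) (huv : u ≠ v) (htv : t ≠ v)
    (hAuv : A u v = 1) (hut : A u t = 1) (hvu : A v u = 1) (hvt0 : A v t = 0)
    (hkey : ∀ y' x' : Fin n, y' ≠ x' → A y' x' = 1 →
      outdeg n A u ≤ outdeg n A y' ∧ (outdeg n A u = outdeg n A y' →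
        indeg n A v ≤ indeg n A x' ∧ (indeg n A v = indeg n A x' → A v u ≤ A x' y'))) :
    False := by
  have s2 := rowdom n A h01 hdiag hsw u v t huv htv hut hvt0
  have k := (hkey v u (Ne.symm huv) hvu).1
  omega

/-- Corollary 4, first part: a nonempty threshold digraph has an arc
whose deletion leaves a threshold digraph. -/
theorem stmt12 (n : ℕ) (A : Fin n → Fin n → ℕ)
    (h01 : ZeroOne n A) (hdiag : ZeroDiag n A)
    (hsw : ¬ HasTwoSwitch n A) (hc3 : ¬ HasInducedC3 n A)
    (hne : ∃ u v : Fin n, u ≠ v ∧ A u v = 1) :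
    ∃ u v : Fin n, u ≠ v ∧ A u v = 1 ∧
      ¬ HasTwoSwitch n (fun i j => if i = u ∧ j = v then 0 else A i j) ∧
      ¬ HasInducedC3 n (fun i j => if i = u ∧ j = v then 0 else A i j) := by
  classical
  obtain ⟨u0, v0, hne0, hA0⟩ := hne
  set S : Finset (Fin n × Fin n) :=
    Finset.univ.filter (fun p => p.1 ≠ p.2 ∧ A p.1 p.2 = 1) with hS
  have hSne : S.Nonempty := ⟨(u0, v0), by simp [hS, hne0, hA0]⟩
  obtain ⟨p, hpS, hmin⟩ := S.exists_min_image
    (fun p => outdeg n A p.1 * (2 * n + 2) + (indeg n A p.2 * 2 + A p.2 p.1)) hSne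
  obtain ⟨u, v⟩ := p
  rw [hS, Finset.mem_filter] at hpS
  obtain ⟨-, huv, hAuv⟩ := hpS
  have hkey : ∀ y x : Fin n, y ≠ x → A y x = 1 →
      outdeg n A u ≤ outdeg n A y ∧ (outdeg n A u = outdeg n A y →
        indeg n A v ≤ indeg n A x ∧ (indeg n A v = indeg n A x → A v u ≤ A x y)) := by
    intro y x hyx hAyx
    have hm := hmin (y, x) (by rw [hS, Finset.mem_filter]; exact ⟨Finset.mem_univ _, hyx, hAyx⟩)
    simp only at hm
    have hb1 : indeg n A v * 2 + A v u < 2 * n + 2 := by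
      have := aux_indeg_le n A h01 v
      have := h01 v u
      omega
    have hb2 : indeg n A x * 2 + A x y < 2 * n + 2 := by
      have := aux_indeg_le n A h01 x
      have := h01 x y
      omega
    obtain ⟨hL1, hL2⟩ := aux_lex _ _ _ _ _ hm hb1 hb2
    refine ⟨hL1, fun he => ?_⟩
    have hm2 := hL2 he
    have hc1 : A v u < 2 := by have := h01 v u; omega
    have hc2 : A x y < 2 := by have := h01 x y; omega
    exact aux_lex _ _ _ _ _ hm2 hc1 hc2
  refine ⟨u, v, huv, hAuv, ?_, ?_⟩
  · -- no 2-switch in the deleted digraph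
    rintro ⟨w, x, y, z, d1, d2, d3, d4, d5, d6, hwx, hyz, hwz, hyx⟩
    have hAwx : A w x = 1 := by
      by_cases h : w = u ∧ x = v
      · simp [h] at hwx
      · simpa [h] using hwx
    have hAyz : A y z = 1 := by
      by_cases h : y = u ∧ z = v
      · simp [h] at hyz
      · simpa [h] using hyz
    by_cases hc1 : w = u ∧ z = v
    · obtain ⟨hw, hz⟩ := hc1
      have hAux : A u x = 1 := by rw [← hw]; exact hAwx
      have hAyv : A y v = 1 := by rw [← hz]; exact hAyz
      have hAyx0 : A y x = 0 := by
        have h : ¬ (y = u ∧ x = v) := fun hh => d2 (hw.trans hh.1.symm)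
        simpa [h] using hyx
      have hxu : x ≠ u := by rw [← hw]; exact Ne.symm d1
      have hxv : x ≠ v := by rw [← hz]; exact d5
      have hyu : y ≠ u := by rw [← hw]; exact Ne.symm d2
      have hyv : y ≠ v := by rw [← hz]; exact d6
      exact sw_contra n A h01 hdiag hsw u v x y huv hxu hxv hyu hyv d4
        hAuv hAux hAyv hAyx0 hkey
    · have hAwz0 : A w z = 0 := by simpa [hc1] using hwz
      by_cases hc2 : y = u ∧ x = v
      · obtain ⟨hy, hx⟩ := hc2
        have hAuz : A u z = 1 := by rw [← hy]; exact hAyz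
        have hAwv : A w v = 1 := by rw [← hx]; exact hAwx
        have hzu : z ≠ u := by rw [← hy]; exact Ne.symm d6
        have hzv : z ≠ v := by rw [← hx]; exact Ne.symm d5
        have hwu : w ≠ u := by rw [← hy]; exact d2
        have hwv : w ≠ v := by rw [← hx]; exact d1
        exact sw_contra n A h01 hdiag hsw u v z w huv hzu hzv hwu hwv (Ne.symm d3)
          hAuv hAuz hAwv hAwz0 hkey
      · have hAyx0 : A y x = 0 := by simpa [hc2] using hyx
        exact hsw ⟨w, x, y, z, d1, d2, d3, d4, d5, d6, hAwx, hAyz, hAwz0, hAyx0⟩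
  · -- no induced C3 in the deleted digraph
    rintro ⟨x, y, z, d1, d2, d3, e1, e2, e3, e4, e5, e6⟩
    have hAxy : A x y = 1 := by
      by_cases h : x = u ∧ y = v
      · simp [h] at e1
      · simpa [h] using e1
    have hAyz : A y z = 1 := by
      by_cases h : y = u ∧ z = v
      · simp [h] at e2
      · simpa [h] using e2
    have hAzx : A z x = 1 := by
      by_cases h : z = u ∧ x = v
      · simp [h] at e3
      · simpa [h] using e3
    by_cases hc1 : y = u ∧ x = v
    · obtain ⟨hy, hx⟩ := hc1
      have hut : A u z = 1 := by rw [← hy]; exact hAyz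
      have hvu : A v u = 1 := by rw [← hx, ← hy]; exact hAxy
      have hvt0 : A v z = 0 := by
        have h : ¬ (x = u ∧ z = v) := fun hh => huv (hh.1.symm.trans hx)
        rw [← hx]
        simpa [h] using e6
      have htv : z ≠ v := by rw [← hx]; exact Ne.symm d2
      exact c3_contra n A h01 hdiag hsw u v z huv htv hAuv hut hvu hvt0 hkey
    · have hAyx0 : A y x = 0 := by simpa [hc1] using e4
      by_cases hc2 : z = u ∧ y = v
      · obtain ⟨hz, hy⟩ := hc2
        have hut : A u x = 1 := by rw [← hz]; exact hAzx
        have hvu : A v u = 1 := by rw [← hy, ← hz]; exact hAyz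
        have hvt0 : A v x = 0 := by rw [← hy]; exact hAyx0
        have htv : x ≠ v := by rw [← hy]; exact d1
        exact c3_contra n A h01 hdiag hsw u v x huv htv hAuv hut hvu hvt0 hkey
      · have hAzy0 : A z y = 0 := by simpa [hc2] using e5
        by_cases hc3' : x = u ∧ z = v
        · obtain ⟨hx, hz⟩ := hc3'
          have hut : A u y = 1 := by rw [← hx]; exact hAxy
          have hvu : A v u = 1 := by rw [← hz, ← hx]; exact hAzx
          have hvt0 : A v y = 0 := by rw [← hz]; exact hAzy0
          have htv : y ≠ v := by rw [← hz]; exact d3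
          exact c3_contra n A h01 hdiag hsw u v y huv htv hAuv hut hvu hvt0 hkey
        · have hAxz0 : A x z = 0 := by simpa [hc3'] using e6
          exact hc3 ⟨x, y, z, d1, d2, d3, hAxy, hAyz, hAzx, hAyx0, hAzy0, hAxz0⟩
end

section
/- Let G be a threshold digraph on n vertices. If G is not complete (i.e., some ordered pair (u,v) with u ≠ v is not an arc of G), then there exists an ordered pair e = (u,v) with u ≠ v that is not an arc of G such that the digraph G + e obtained by adding the arc e is again a threshold digraph. -/
lemma key1 (n : ℕ) (A : Fin n → Fin n → ℕ) (h01 : ZeroOne n A) (hsw : ¬ HasTwoSwitch n A)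
    (w x y z : Fin n) (d1 : w ≠ x) (d2 : w ≠ y) (d3 : w ≠ z) (d4 : x ≠ y) (d5 : x ≠ z)
    (d6 : y ≠ z) (hwx : A w x = 1) (hyz : A y z = 1) (hwz : A w z = 0) : A y x = 1 := by
  rcases h01 y x with h | h
  · exact absurd ⟨w, x, y, z, d1, d2, d3, d4, d5, d6, hwx, hyz, hwz, h⟩ hsw
  · exact h

lemma key2 (n : ℕ) (A : Fin n → Fin n → ℕ) (h01 : ZeroOne n A) (hsw : ¬ HasTwoSwitch n A)
    (w x y z : Fin n) (d1 : w ≠ x) (d2 : w ≠ y) (d3 : w ≠ z) (d4 : x ≠ y) (d5 : x ≠ z)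
    (d6 : y ≠ z) (hwx : A w x = 1) (hyz : A y z = 1) (hyx : A y x = 0) : A w z = 1 := by
  rcases h01 w z with h | h
  · exact absurd ⟨w, x, y, z, d1, d2, d3, d4, d5, d6, hwx, hyz, h, hyx⟩ hsw
  · exact h

lemma indeg_le (n : ℕ) (A : Fin n → Fin n → ℕ) (h01 : ZeroOne n A) (q : Fin n) :
    indeg n A q ≤ n := by
  have h : indeg n A q ≤ ∑ _i : Fin n, 1 :=
    Finset.sum_le_sum (fun i _ => by rcases h01 i q with h | h <;> omega)
  simpa using h

/-- Contradiction from a 2-switch created by adding the maximal non-arc `(u,v)`. -/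
lemma aux_main (n : ℕ) (A : Fin n → Fin n → ℕ) (h01 : ZeroOne n A) (hdiag : ZeroDiag n A)
    (hsw : ¬ HasTwoSwitch n A) (u v : Fin n)
    (hmax : ∀ a b : Fin n, a ≠ b → A a b = 0 →
      (2*n+2) * outdeg n A a + 2 * indeg n A b + A b a ≤
      (2*n+2) * outdeg n A u + 2 * indeg n A v + A v u)
    (huv : u ≠ v) (hAuv : A u v = 0)
    (y z : Fin n) (hyu : y ≠ u) (hyv : y ≠ v) (hzu : z ≠ u) (hzv : z ≠ v) (hyz : y ≠ z)
    (hAyz : A y z = 1) (hAuz : A u z = 0) (hAyv : A y v = 0) : False := by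
  have lemod : ∀ p q : Fin n, p ≠ q → A p q = 0 → outdeg n A p ≤ outdeg n A u := by
    intro p q hpq h0
    have h := hmax p q hpq h0
    have h1 : indeg n A v ≤ n := indeg_le n A h01 v
    have h2 : A v u ≤ 1 := by rcases h01 v u with h' | h' <;> omega
    by_contra hc
    push_neg at hc
    have h3 : (2*n+2) * (outdeg n A u + 1) ≤ (2*n+2) * outdeg n A p :=
      Nat.mul_le_mul_left _ hc
    have h4 : (2*n+2) * (outdeg n A u + 1) = (2*n+2) * outdeg n A u + (2*n+2) := by ring
    omega
  have lemid : ∀ q : Fin n, u ≠ q → A u q = 0 →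
      indeg n A q ≤ indeg n A v ∧ (indeg n A q = indeg n A v → A q u ≤ A v u) := by
    intro q hq h0
    have h := hmax u q hq h0
    have h2 : A v u ≤ 1 := by rcases h01 v u with h' | h' <;> omega
    have h3 : A q u ≤ 1 := by rcases h01 q u with h' | h' <;> omega
    omega
  -- row comparison: y vs u
  have hrow : outdeg n A u + (A y u + 1) ≤ outdeg n A y + A u y := by
    have hpt : ∀ j ∈ (Finset.univ : Finset (Fin n)),
        A u j + ((if j = u then A y u else 0) + (if j = z then 1 else 0)) ≤
        A y j + (if j = y then A u y else 0) := by
      intro j _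
      by_cases hju : j = u
      · rw [hju]; simp [hdiag u, Ne.symm hzu, Ne.symm hyu]
      · by_cases hjy : j = y
        · rw [hjy]; simp [hdiag y, hyz, hyu]
        · by_cases hjz : j = z
          · rw [hjz]; simp [hAuz, hAyz, Ne.symm hyz, hzu, hzv]
          · have himp : A u j = 1 → A y j = 1 := fun h =>
              key1 n A h01 hsw u j y z (fun e => hju e.symm) (Ne.symm hyu) (Ne.symm hzu)
                hjy hjz hyz h hAyz hAuz
            rcases h01 u j with h0 | h0
            · simp [h0, hju, hjy, hjz]
            · simp [h0, himp h0, hju, hjy, hjz]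
    have hsum := Finset.sum_le_sum hpt
    simp only [Finset.sum_add_distrib, Finset.sum_ite_eq', Finset.mem_univ, if_true] at hsum
    exact hsum
  have hAyu : A y u = 0 := by
    have hy := lemod y v hyv hAyv
    have h2 : A u y ≤ 1 := by rcases h01 u y with h' | h' <;> omega
    omega
  -- column comparison: z vs v
  have hcol : indeg n A v + (1 + A v z) ≤ indeg n A z + A z v := by
    have hpt : ∀ i ∈ (Finset.univ : Finset (Fin n)),
        A i v + ((if i = y then 1 else 0) + (if i = v then A v z else 0)) ≤
        A i z + (if i = z then A z v else 0) := by
      intro i _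
      by_cases hiy : i = y
      · rw [hiy]; simp [hAyv, hAyz, hyv, hyz, hyu]
      · by_cases hiv : i = v
        · rw [hiv]; simp [hdiag v, Ne.symm hyv, Ne.symm hzv, Ne.symm huv]
        · by_cases hiz : i = z
          · rw [hiz]; simp [hdiag z, Ne.symm hyz, hzv, hzu]
          · have himp : A i v = 1 → A i z = 1 := fun h =>
              key2 n A h01 hsw i v y z hiv hiy hiz (Ne.symm hyv) (Ne.symm hzv) hyz h hAyz hAyv
            rcases h01 i v with h0 | h0
            · simp [h0, hiy, hiv, hiz]
            · simp [h0, himp h0, hiy, hiv, hiz]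
    have hsum := Finset.sum_le_sum hpt
    simp only [Finset.sum_add_distrib, Finset.sum_ite_eq', Finset.mem_univ, if_true] at hsum
    exact hsum
  obtain ⟨hidz, htie⟩ := lemid z (Ne.symm hzu) hAuz
  have hAzv1 : A z v = 1 := by
    have h2 : A z v ≤ 1 := by rcases h01 z v with h' | h' <;> omega
    omega
  have hAvz0 : A v z = 0 := by
    have h2 : A z v ≤ 1 := by rcases h01 z v with h' | h' <;> omega
    omega
  have hidzv : indeg n A z = indeg n A v := by omega
  rcases h01 v u with hvu | hvu
  · -- A v u = 0 : tie-break gives A z u = 0, then outdeg contradiction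
    have hAzu : A z u = 0 := by
      have := htie hidzv
      omega
    have hodz := lemod z u hzu hAzu
    have hrow2 : outdeg n A u + 1 ≤ outdeg n A z := by
      have hpt : ∀ j ∈ (Finset.univ : Finset (Fin n)),
          A u j + (if j = v then 1 else 0) ≤ A z j := by
        intro j _
        by_cases hjv : j = v
        · rw [hjv]; simp [hAuv, hAzv1, Ne.symm hyv, Ne.symm hzv, Ne.symm huv]
        · by_cases hju : j = u
          · rw [hju]; simp [hdiag u, Ne.symm hzu, huv]
          · by_cases hjz : j = z
            · rw [hjz]; simp [hAuz, hjv, hzu, hzv]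
            · have himp : A u j = 1 → A z j = 1 := fun h =>
                key1 n A h01 hsw u j z v (fun e => hju e.symm) (Ne.symm hzu) huv
                  hjz hjv hzv h hAzv1 hAuv
              rcases h01 u j with h0 | h0
              · simp [h0, hjv]
              · simp [h0, himp h0, hjv]
      have hsum := Finset.sum_le_sum hpt
      simp only [Finset.sum_add_distrib, Finset.sum_ite_eq', Finset.mem_univ, if_true] at hsum
      exact hsum
    omega
  · -- A v u = 1 : 2-switch (v,u),(y,z) in A
    exact hsw ⟨v, u, y, z, Ne.symm huv, Ne.symm hyv, Ne.symm hzv, Ne.symm hyu,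
      Ne.symm hzu, hyz, hvu, hAyz, hAvz0, hAyu⟩

/-- Contradiction from an induced C3 created by adding the maximal non-arc `(u,v)`. -/
lemma aux_c3 (n : ℕ) (A : Fin n → Fin n → ℕ) (h01 : ZeroOne n A) (hdiag : ZeroDiag n A)
    (hsw : ¬ HasTwoSwitch n A) (u v : Fin n)
    (hmax : ∀ a b : Fin n, a ≠ b → A a b = 0 →
      (2*n+2) * outdeg n A a + 2 * indeg n A b + A b a ≤
      (2*n+2) * outdeg n A u + 2 * indeg n A v + A v u)
    (huv : u ≠ v) (hAuv : A u v = 0)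
    (w : Fin n) (hwu : w ≠ u) (hwv : w ≠ v)
    (hAvw : A v w = 1) (hAwu : A w u = 1) (hAvu : A v u = 0) (hAwv : A w v = 0)
    (hAuw : A u w = 0) : False := by
  have lemod : ∀ p q : Fin n, p ≠ q → A p q = 0 → outdeg n A p ≤ outdeg n A u := by
    intro p q hpq h0
    have h := hmax p q hpq h0
    have h1 : indeg n A v ≤ n := indeg_le n A h01 v
    have h2 : A v u ≤ 1 := by rcases h01 v u with h' | h' <;> omega
    by_contra hc
    push_neg at hc
    have h3 : (2*n+2) * (outdeg n A u + 1) ≤ (2*n+2) * outdeg n A p :=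
      Nat.mul_le_mul_left _ hc
    have h4 : (2*n+2) * (outdeg n A u + 1) = (2*n+2) * outdeg n A u + (2*n+2) := by ring
    omega
  have hodv := lemod v u (Ne.symm huv) hAvu
  have hrow : outdeg n A u + 1 ≤ outdeg n A v := by
    have hpt : ∀ j ∈ (Finset.univ : Finset (Fin n)),
        A u j + (if j = w then 1 else 0) ≤ A v j := by
      intro j _
      by_cases hjw : j = w
      · rw [hjw]; simp [hAuw, hAvw, hwu, hwv]
      · by_cases hju : j = u
        · rw [hju]; simp [hdiag u, Ne.symm hwu, huv]
        · by_cases hjv : j = v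
          · rw [hjv]; simp [hAuv, hdiag v, Ne.symm hwv]
          · have himp : A u j = 1 → A v j = 1 := fun h =>
              key1 n A h01 hsw u j v w (fun e => hju e.symm) huv (Ne.symm hwu)
                hjv hjw (Ne.symm hwv) h hAvw hAuw
            rcases h01 u j with h0 | h0
            · simp [h0, hjw]
            · simp [h0, himp h0, hjw]
    have hsum := Finset.sum_le_sum hpt
    simp only [Finset.sum_add_distrib, Finset.sum_ite_eq', Finset.mem_univ, if_true] at hsum
    exact hsum
  omega

/-- Corollary 4, second part: a non-complete threshold digraph has a
non-arc whose addition leaves a threshold digraph. -/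
theorem stmt13 (n : ℕ) (A : Fin n → Fin n → ℕ)
    (h01 : ZeroOne n A) (hdiag : ZeroDiag n A)
    (hsw : ¬ HasTwoSwitch n A) (hc3 : ¬ HasInducedC3 n A)
    (hnc : ∃ u v : Fin n, u ≠ v ∧ A u v = 0) :
    ∃ u v : Fin n, u ≠ v ∧ A u v = 0 ∧
      ¬ HasTwoSwitch n (fun i j => if i = u ∧ j = v then 1 else A i j) ∧
      ¬ HasInducedC3 n (fun i j => if i = u ∧ j = v then 1 else A i j) := by
  classical
  obtain ⟨u0, v0, huv0, hA0⟩ := hnc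
  obtain ⟨p, hpS, hpmax⟩ := Finset.exists_max_image
    (Finset.univ.filter (fun p : Fin n × Fin n => p.1 ≠ p.2 ∧ A p.1 p.2 = 0))
    (fun p => (2*n+2) * outdeg n A p.1 + 2 * indeg n A p.2 + A p.2 p.1)
    ⟨(u0, v0), Finset.mem_filter.mpr ⟨Finset.mem_univ _, huv0, hA0⟩⟩
  set u := p.1
  set v := p.2
  have hpS' := Finset.mem_filter.mp hpS
  obtain ⟨huv, hAuv⟩ := hpS'.2
  have hmax : ∀ a b : Fin n, a ≠ b → A a b = 0 →
      (2*n+2) * outdeg n A a + 2 * indeg n A b + A b a ≤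
      (2*n+2) * outdeg n A u + 2 * indeg n A v + A v u := by
    intro a b hab h0
    exact hpmax (a, b) (Finset.mem_filter.mpr ⟨Finset.mem_univ _, hab, h0⟩)
  refine ⟨u, v, huv, hAuv, ?_, ?_⟩
  · -- no new 2-switch
    rintro ⟨w, x, y, z, d1, d2, d3, d4, d5, d6, hwx, hyz, hwz, hyx⟩
    have hsplit0 : ∀ i j : Fin n, (if i = u ∧ j = v then 1 else A i j) = 0 →
        A i j = 0 ∧ ¬(i = u ∧ j = v) := by
      intro i j h
      by_cases hc : i = u ∧ j = v
      · simp [hc] at h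
      · rw [if_neg hc] at h; exact ⟨h, hc⟩
    have hsplit1 : ∀ i j : Fin n, (if i = u ∧ j = v then 1 else A i j) = 1 →
        (i = u ∧ j = v) ∨ A i j = 1 := by
      intro i j h
      by_cases hc : i = u ∧ j = v
      · exact Or.inl hc
      · rw [if_neg hc] at h; exact Or.inr h
    obtain ⟨hwz0, hwzn⟩ := hsplit0 w z hwz
    obtain ⟨hyx0, hyxn⟩ := hsplit0 y x hyx
    rcases hsplit1 w x hwx with hwx' | hwx'
    · rcases hsplit1 y z hyz with hyz' | hyz'
      · exact d2 (hwx'.1.trans hyz'.1.symm)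
      · -- new arc is (w,x) = (u,v)
        obtain ⟨hw, hx⟩ := hwx'
        subst hw; subst hx
        exact aux_main n A h01 hdiag hsw u v hmax huv hAuv y z
          (Ne.symm d2) (Ne.symm d4) (Ne.symm d3) (Ne.symm d5) d6 hyz' hwz0 hyx0
    · rcases hsplit1 y z hyz with hyz' | hyz'
      · -- new arc is (y,z) = (u,v)
        obtain ⟨hy, hz⟩ := hyz'
        subst hy; subst hz
        exact aux_main n A h01 hdiag hsw u v hmax huv hAuv w x
          d2 d3 d4 d5 d1 hwx' hyx0 hwz0
      · exact hsw ⟨w, x, y, z, d1, d2, d3, d4, d5, d6, hwx', hyz', hwz0, hyx0⟩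
  · -- no new induced C3
    rintro ⟨x, y, z, dxy, dxz, dyz, h1, h2, h3, h4, h5, h6⟩
    have hsplit0 : ∀ i j : Fin n, (if i = u ∧ j = v then 1 else A i j) = 0 →
        A i j = 0 ∧ ¬(i = u ∧ j = v) := by
      intro i j h
      by_cases hc : i = u ∧ j = v
      · simp [hc] at h
      · rw [if_neg hc] at h; exact ⟨h, hc⟩
    have hsplit1 : ∀ i j : Fin n, (if i = u ∧ j = v then 1 else A i j) = 1 →
        (i = u ∧ j = v) ∨ A i j = 1 := by
      intro i j h
      by_cases hc : i = u ∧ j = v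
      · exact Or.inl hc
      · rw [if_neg hc] at h; exact Or.inr h
    obtain ⟨h4', _⟩ := hsplit0 y x h4
    obtain ⟨h5', _⟩ := hsplit0 z y h5
    obtain ⟨h6', _⟩ := hsplit0 x z h6
    rcases hsplit1 x y h1 with hn1 | ho1
    · -- new arc x→y : x = u, y = v, w := z
      obtain ⟨hxu, hyv⟩ := hn1
      subst hxu; subst hyv
      have ho2 : A v z = 1 := by
        rcases hsplit1 v z h2 with hn | ho
        · exact absurd hn.1 (Ne.symm huv)
        · exact ho
      have ho3 : A z u = 1 := by
        rcases hsplit1 z u h3 with hn | ho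
        · exact absurd hn.2 huv
        · exact ho
      exact aux_c3 n A h01 hdiag hsw u v hmax huv hAuv z (Ne.symm dxz) (Ne.symm dyz)
        ho2 ho3 h4' h5' h6'
    · rcases hsplit1 y z h2 with hn2 | ho2
      · -- new arc y→z : y = u, z = v, w := x
        obtain ⟨hyu, hzv⟩ := hn2
        subst hyu; subst hzv
        have ho3 : A v x = 1 := by
          rcases hsplit1 v x h3 with hn | ho
          · exact absurd hn.1 (Ne.symm huv)
          · exact ho
        exact aux_c3 n A h01 hdiag hsw u v hmax huv hAuv x dxy dxz
          ho3 ho1 h5' h6' h4'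
      · rcases hsplit1 z x h3 with hn3 | ho3
        · -- new arc z→x : z = u, x = v, w := y
          obtain ⟨hzu, hxv⟩ := hn3
          subst hzu; subst hxv
          exact aux_c3 n A h01 hdiag hsw u v hmax huv hAuv y dyz (Ne.symm dxy)
            ho1 ho2 h6' h4' h5'
        · exact hc3 ⟨x, y, z, dxy, dxz, dyz, ho1, ho2, ho3, h4', h5', h6'⟩
end
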